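/- arXiv:1807.08540 — 13 statements merged into one kernel-verified Lean document; each statement's English description precedes it below -/
import Mathlib

section
/- Let π : X → Y be a pseudo-quotient for the action of G on X. Then for any two points x₁, x₂ ∈ X one has π(x₁) = π(x₂) if and only if the closures in X of the orbits G·x₁ and G·x₂ have nonempty intersection. -/
open Pointwise

/-- A pseudo-quotient for the action of a group `G` on a topological space `X`:
a continuous surjective map `π : X → Y` that is constant on `G`-orbits and such that
for any two disjoint closed `G`-invariant subsets `W₁, W₂ ⊆ X`, the closures of
`π(W₁)` and `π(W₂)` are disjoint. -/
structure IsPseudoQuotient (G : Type*) {X Y : Type*} [Group G] [MulAction G X]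
    [TopologicalSpace X] [TopologicalSpace Y] (π : X → Y) : Prop where
  continuous : Continuous π
  surjective : Function.Surjective π
  invariant : ∀ (g : G) (x : X), π (g • x) = π x
  separates : ∀ W₁ W₂ : Set X, IsClosed W₁ → IsClosed W₂ →
    (∀ g : G, g • W₁ = W₁) → (∀ g : G, g • W₂ = W₂) → Disjoint W₁ W₂ →
    Disjoint (closure (π '' W₁)) (closure (π '' W₂))

/-- π is constant (with value π x) on the closure of the orbit of x. -/
lemma pi_const_on_orbit_closure {G X Y : Type*} [Group G] [MulAction G X]
    [TopologicalSpace X] [TopologicalSpace Y] [T1Space Y]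
    (π : X → Y) (hπ : IsPseudoQuotient G π) (x : X) :
    ∀ z ∈ closure (MulAction.orbit G x), π z = π x := by
  intro z hz
  have himg : π '' MulAction.orbit G x ⊆ {π x} := by
    rintro y ⟨w, ⟨g, rfl⟩, rfl⟩
    simp [hπ.invariant g x]
  have : π z ∈ closure ({π x} : Set Y) := by
    have h1 : π z ∈ closure (π '' MulAction.orbit G x) :=
      (Continuous.closure_preimage_subset hπ.continuous _)
        (closure_mono (Set.subset_preimage_image π _) hz)
    exact closure_mono himg h1
  simpa [IsClosed.closure_eq isClosed_singleton] using this

/-- For a pseudo-quotient `π`, two points have the same image iff the closures of their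
orbits intersect. -/
theorem pseudoQuotient_eq_iff_orbitClosures_inter {G X Y : Type*} [Group G] [MulAction G X]
    [TopologicalSpace X] [TopologicalSpace Y] [T1Space Y] [ContinuousConstSMul G X]
    (π : X → Y) (hπ : IsPseudoQuotient G π) (x₁ x₂ : X) :
    π x₁ = π x₂ ↔
      (closure (MulAction.orbit G x₁) ∩ closure (MulAction.orbit G x₂)).Nonempty := by
  constructor
  · intro h
    by_contra hne
    rw [Set.not_nonempty_iff_eq_empty, ← Set.disjoint_iff_inter_eq_empty] at hne
    have hinv : ∀ (x : X) (g : G), g • closure (MulAction.orbit G x)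
        = closure (MulAction.orbit G x) := by
      intro x g
      rw [← closure_smul, MulAction.smul_orbit]
    have hsep := hπ.separates _ _ isClosed_closure isClosed_closure
      (hinv x₁) (hinv x₂) hne
    have h1 : π x₁ ∈ closure (π '' closure (MulAction.orbit G x₁)) :=
      subset_closure ⟨x₁, subset_closure (MulAction.mem_orbit_self x₁), rfl⟩
    have h2 : π x₂ ∈ closure (π '' closure (MulAction.orbit G x₂)) :=
      subset_closure ⟨x₂, subset_closure (MulAction.mem_orbit_self x₂), rfl⟩
    exact hsep.ne_of_mem h1 h2 h
  · rintro ⟨z, hz₁, hz₂⟩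
    rw [← pi_const_on_orbit_closure π hπ x₁ z hz₁,
      pi_const_on_orbit_closure π hπ x₂ z hz₂]
end

section
/- Let π : X → Y be a pseudo-quotient for the action of G on X. Then for every closed G-invariant subset W ⊆ X, the image π(W) is closed in Y. -/
open Pointwise

/-- For a pseudo-quotient `π`, the image of any closed `G`-invariant subset is closed. -/
theorem pseudoQuotient_isClosed_image {G X Y : Type*} [Group G] [MulAction G X]
    [TopologicalSpace X] [TopologicalSpace Y] [T1Space Y] [ContinuousConstSMul G X]
    (π : X → Y) (hπ : IsPseudoQuotient G π)
    (W : Set X) (hWc : IsClosed W) (hWinv : ∀ g : G, g • W = W) :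
    IsClosed (π '' W) := by
  rw [← closure_subset_iff_isClosed]
  intro y hy
  by_contra hyW
  set F : Set X := π ⁻¹' {y} with hF
  have hFc : IsClosed F := (isClosed_singleton).preimage hπ.continuous
  have hFinv : ∀ g : G, g • F = F := by
    intro g
    ext x
    simp only [Set.mem_smul_set_iff_inv_smul_mem, hF, Set.mem_preimage,
      Set.mem_singleton_iff, hπ.invariant]
  have hdisj : Disjoint W F := by
    rw [Set.disjoint_left]
    intro x hxW hxF
    exact hyW ⟨x, hxW, hxF⟩
  have := hπ.separates W F hWc hFc hWinv hFinv hdisj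
  obtain ⟨x, rfl⟩ := hπ.surjective y
  exact (Set.disjoint_left.mp this hy) (subset_closure ⟨x, rfl, rfl⟩)
end

section
/- Let π : X → Y be a pseudo-quotient for the action of G on X and let W ⊆ X be a closed G-invariant subset. Then the restriction π|_W : W → π(W), where W and π(W) carry the subspace topologies and G acts on W by restriction, is a pseudo-quotient for the action of G on W. -/
open Pointwise

/-- A `G`-invariant subset of `X`, viewed as a `SubMulAction`, so that the restricted
`G`-action on the subtype is available. -/
def invariantSubMulAction {G X : Type*} [Group G] [MulAction G X]
    (W : Set X) (hWinv : ∀ g : G, g • W = W) : SubMulAction G X :=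
  ⟨W, fun g {x} hx => by rw [← hWinv g]; exact Set.smul_mem_smul_set hx⟩

/-- The restriction of a pseudo-quotient to a closed `G`-invariant subset `W`,
as a map `W → π(W)` (with subspace topologies and restricted `G`-action),
is again a pseudo-quotient. -/
theorem pseudoQuotient_restrict_closed {G X Y : Type*} [Group G] [MulAction G X]
    [TopologicalSpace X] [TopologicalSpace Y] [T1Space Y] [ContinuousConstSMul G X]
    (π : X → Y) (hπ : IsPseudoQuotient G π)
    (W : Set X) (hWc : IsClosed W) (hWinv : ∀ g : G, g • W = W) :
    IsPseudoQuotient G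
      (fun w : invariantSubMulAction W hWinv =>
        (⟨π w, Set.mem_image_of_mem π w.2⟩ : π '' W)) := by
  constructor
  · exact Continuous.subtype_mk (hπ.continuous.comp continuous_subtype_val) _
  · rintro ⟨y, x, hxW, rfl⟩
    exact ⟨⟨x, hxW⟩, rfl⟩
  · intro g x
    exact Subtype.ext (hπ.invariant g x.val)
  · intro W₁ W₂ h₁c h₂c h₁inv h₂inv hdisj
    have hemb := hWc.isClosedEmbedding_subtypeVal
    have key : ∀ (V : Set (invariantSubMulAction W hWinv)), IsClosed V →
        (∀ g : G, g • V = V) →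
        IsClosed (Subtype.val '' V) ∧ (∀ g : G, g • (Subtype.val '' V) = Subtype.val '' V) := by
      intro V hVc hVinv
      refine ⟨hemb.isClosedMap _ hVc, fun g => ?_⟩
      conv_rhs => rw [← hVinv g]
      ext x
      constructor
      · rintro ⟨y, ⟨z, hz, rfl⟩, rfl⟩
        exact ⟨g • z, Set.smul_mem_smul_set hz, rfl⟩
      · rintro ⟨z, ⟨w, hw, rfl⟩, rfl⟩
        exact ⟨w.val, ⟨w, hw, rfl⟩, rfl⟩
    obtain ⟨h₁c', h₁inv'⟩ := key W₁ h₁c h₁inv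
    obtain ⟨h₂c', h₂inv'⟩ := key W₂ h₂c h₂inv
    have hdisj' : Disjoint (Subtype.val '' W₁) (Subtype.val '' W₂) :=
      (Set.disjoint_image_iff Subtype.val_injective).mpr hdisj
    have hsep := hπ.separates _ _ h₁c' h₂c' h₁inv' h₂inv' hdisj'
    have himg : ∀ (V : Set (invariantSubMulAction W hWinv)),
        Subtype.val '' ((fun w : invariantSubMulAction W hWinv =>
          (⟨π w, Set.mem_image_of_mem π w.2⟩ : π '' W)) '' V) = π '' (Subtype.val '' V) := by
      intro V
      ext y
      constructor
      · rintro ⟨z, ⟨w, hw, rfl⟩, rfl⟩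
        exact ⟨w.val, ⟨w, hw, rfl⟩, rfl⟩
      · rintro ⟨x, ⟨w, hw, rfl⟩, rfl⟩
        exact ⟨_, ⟨w, hw, rfl⟩, rfl⟩
    rw [Topology.IsEmbedding.subtypeVal.closure_eq_preimage_closure_image,
        Topology.IsEmbedding.subtypeVal.closure_eq_preimage_closure_image, himg, himg]
    exact (hsep.preimage _)
end

section
/- Let π : X → Y be a pseudo-quotient for the action of G on X and let V ⊆ Y be an open subset. Then the restriction π : π⁻¹(V) → V, where π⁻¹(V) and V carry the subspace topologies and G acts on π⁻¹(V) by restriction, is a pseudo-quotient for the action of G on π⁻¹(V). -/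
open Pointwise

private lemma sep_contra {G X Y : Type*} [Group G] [MulAction G X]
    [TopologicalSpace X] [TopologicalSpace Y] {π : X → Y} (hπ : IsPseudoQuotient G π)
    {B₁ B₂ : Set X} {y : Y}
    (hc1 : IsClosed B₁) (hc2 : IsClosed B₂)
    (hi1 : ∀ g : G, g • B₁ = B₁) (hi2 : ∀ g : G, g • B₂ = B₂)
    (hd : Disjoint B₁ B₂)
    (hy1 : y ∈ closure (π '' B₁)) (hy2 : y ∈ closure (π '' B₂)) : False :=
  (hπ.separates B₁ B₂ hc1 hc2 hi1 hi2 hd).ne_of_mem hy1 hy2 rfl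

private lemma aux_closed {G X Y : Type*} [Group G] [MulAction G X]
    [TopologicalSpace X] [TopologicalSpace Y] (π : X → Y) (V : Set Y)
    (S : SubMulAction G X) (hS : (S : Set X) = π ⁻¹' V)
    (W : Set ↥S) (hWc : IsClosed W) :
    ∀ x : X, x ∈ closure (Subtype.val '' W) → π x ∈ V → x ∈ (Subtype.val '' W : Set X) := by
  intro x hx hxV
  obtain ⟨C, hCc, hCW⟩ := isClosed_induced_iff.mp hWc
  have himg : Subtype.val '' W = C ∩ π ⁻¹' V := by
    rw [← hCW]
    ext z
    constructor
    · rintro ⟨w, hwC, rfl⟩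
      refine ⟨hwC, ?_⟩
      have h2 : (w : X) ∈ (S : Set X) := w.2
      rwa [hS] at h2
    · rintro ⟨hzC, hzV⟩
      have h2 : z ∈ (S : Set X) := by rw [hS]; exact hzV
      exact ⟨⟨z, h2⟩, hzC, rfl⟩
  have hxC : x ∈ C := by
    have hsub : closure (Subtype.val '' W) ⊆ C := by
      apply closure_minimal _ hCc
      rw [himg]; exact Set.inter_subset_left
    exact hsub hx
  rw [himg]; exact ⟨hxC, hxV⟩

private lemma aux_inv {G X : Type*} [Group G] [MulAction G X]
    (S : SubMulAction G X) (W : Set ↥S) (hW : ∀ g : G, g • W = W) (g : G) :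
    g • (Subtype.val '' W : Set X) = Subtype.val '' W := by
  have himg : (Subtype.val '' (g • W) : Set X) = g • (Subtype.val '' W : Set X) := by
    ext z
    constructor
    · rintro ⟨w, hw, rfl⟩
      obtain ⟨w', hw', rfl⟩ := hw
      exact ⟨w'.1, ⟨w', hw', rfl⟩, rfl⟩
    · rintro ⟨z', ⟨w', hw', rfl⟩, rfl⟩
      exact ⟨g • w', ⟨w', hw', rfl⟩, rfl⟩
  rw [← himg, hW g]

/-- The restriction of a pseudo-quotient over an open subset `V` of the base, as a map
`π⁻¹(V) → V` (with subspace topologies and restricted `G`-action), is again a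
pseudo-quotient. -/
theorem pseudoQuotient_restrict_open_base {G X Y : Type*} [Group G] [MulAction G X]
    [TopologicalSpace X] [TopologicalSpace Y] [T1Space Y] [ContinuousConstSMul G X]
    (π : X → Y) (hπ : IsPseudoQuotient G π)
    (V : Set Y) (hV : IsOpen V) :
    IsPseudoQuotient G
      (fun x : (⟨π ⁻¹' V, fun g {x} hx => by
          show π (g • x) ∈ V
          rw [hπ.invariant g x]; exact hx⟩ : SubMulAction G X) =>
        (⟨π x, x.2⟩ : V)) := by
  constructor
  · exact (hπ.continuous.comp continuous_subtype_val).subtype_mk _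
  · rintro ⟨v, hv⟩
    obtain ⟨x, hx⟩ := hπ.surjective v
    exact ⟨⟨x, show π x ∈ V from hx ▸ hv⟩, Subtype.ext hx⟩
  · intro g x
    exact Subtype.ext (hπ.invariant g x.1)
  · intro W₁ W₂ hW₁c hW₂c hW₁g hW₂g hdisj
    by_contra hcon
    obtain ⟨p, hp₁, hp₂⟩ := Set.not_disjoint_iff.mp hcon
    -- images in X
    set A₁ : Set X := Subtype.val '' W₁ with hA₁def
    set A₂ : Set X := Subtype.val '' W₂ with hA₂def
    -- y in Y
    set y : Y := (p : Y) with hydef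
    have hyV : y ∈ V := p.2
    -- invariance of closures
    have hclinv : ∀ (A : Set X), (∀ g : G, g • A = A) → ∀ g : G,
        g • closure A = closure A := by
      intro A hA g
      rw [← closure_smul, hA g]
    -- the fiber F
    set F : Set X := π ⁻¹' {y} with hFdef
    have hFc : IsClosed F := isClosed_singleton.preimage hπ.continuous
    have hFinv : ∀ g : G, g • F = F := by
      intro g
      ext x
      rw [Set.mem_smul_set_iff_inv_smul_mem]
      simp only [hFdef, Set.mem_preimage, Set.mem_singleton_iff, hπ.invariant]
    have hFsubV : F ⊆ π ⁻¹' V := fun x hx => by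
      simp only [hFdef, Set.mem_preimage, Set.mem_singleton_iff] at hx
      simpa [hx] using hyV
    -- y ∈ closure (π '' Aᵢ)
    have hy₁ : y ∈ closure (π '' A₁) := by
      have h := closure_subtype.mp hp₁
      rw [Set.image_image] at h
      rw [hA₁def, Set.image_image]
      exact h
    have hy₂ : y ∈ closure (π '' A₂) := by
      have h := closure_subtype.mp hp₂
      rw [Set.image_image] at h
      rw [hA₂def, Set.image_image]
      exact h
    have hy₁' : y ∈ closure (π '' closure A₁) :=
      closure_mono (Set.image_mono subset_closure) hy₁
    have hy₂' : y ∈ closure (π '' closure A₂) :=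
      closure_mono (Set.image_mono subset_closure) hy₂
    -- case analysis
    by_cases h1 : (F ∩ closure A₁).Nonempty
    · by_cases h2 : (F ∩ closure A₂).Nonempty
      · obtain ⟨x₁, hx₁F, hx₁A⟩ := h1
        obtain ⟨x₂, hx₂F, hx₂A⟩ := h2
        have hd : Disjoint (F ∩ closure A₁) (F ∩ closure A₂) := by
          rw [Set.disjoint_left]
          rintro x ⟨hxF, hxA₁⟩ ⟨-, hxA₂⟩
          have hxV : π x ∈ V := hFsubV hxF
          have hx1 : x ∈ A₁ := aux_closed π V _ rfl W₁ hW₁c x hxA₁ hxV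
          have hx2 : x ∈ A₂ := aux_closed π V _ rfl W₂ hW₂c x hxA₂ hxV
          have hdA : Disjoint A₁ A₂ := by
            rw [hA₁def, hA₂def]
            exact hdisj.image Subtype.val_injective.injOn (Set.subset_univ _) (Set.subset_univ _)
          exact Set.disjoint_left.mp hdA hx1 hx2
        refine sep_contra (y := y) hπ (hFc.inter isClosed_closure) (hFc.inter isClosed_closure)
          (fun g => ?_) (fun g => ?_) hd ?_ ?_
        · rw [Set.smul_set_inter, hFinv g, hclinv A₁ (aux_inv _ W₁ hW₁g) g]
        · rw [Set.smul_set_inter, hFinv g, hclinv A₂ (aux_inv _ W₂ hW₂g) g]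
        · exact subset_closure ⟨x₁, ⟨hx₁F, hx₁A⟩, hx₁F⟩
        · exact subset_closure ⟨x₂, ⟨hx₂F, hx₂A⟩, hx₂F⟩
      · have hd : Disjoint F (closure A₂) :=
          Set.disjoint_iff_inter_eq_empty.mpr (Set.not_nonempty_iff_eq_empty.mp h2)
        obtain ⟨x, hx⟩ := hπ.surjective y
        refine sep_contra (y := y) hπ hFc isClosed_closure hFinv
          (hclinv A₂ (aux_inv _ W₂ hW₂g)) hd ?_ hy₂'
        exact subset_closure ⟨x, hx, hx⟩
    · have hd : Disjoint F (closure A₁) :=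
        Set.disjoint_iff_inter_eq_empty.mpr (Set.not_nonempty_iff_eq_empty.mp h1)
      obtain ⟨x, hx⟩ := hπ.surjective y
      refine sep_contra (y := y) hπ hFc isClosed_closure hFinv
        (hclinv A₁ (aux_inv _ W₁ hW₁g)) hd ?_ hy₁'
      exact subset_closure ⟨x, hx, hx⟩
end

section
/- Let π : X → Y be a pseudo-quotient for the action of G on X. If A ⊆ X is completely orbitwise-closed, then A is saturated for π, i.e. π⁻¹(π(A)) = A. -/
open Pointwise

/-- A subset `A ⊆ X` is orbitwise-closed if for every `a ∈ A` the closure of the orbit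
`G·a` is contained in `A`. -/
def OrbitwiseClosed (G : Type*) {X : Type*} [Group G] [MulAction G X] [TopologicalSpace X]
    (A : Set X) : Prop :=
  ∀ a ∈ A, closure (MulAction.orbit G a) ⊆ A

/-- If `A` is completely orbitwise-closed (both `A` and its complement are
orbitwise-closed), then `A` is saturated for any pseudo-quotient `π`,
i.e. `π⁻¹(π(A)) = A`. -/
theorem pseudoQuotient_saturated_of_completelyOrbitwiseClosed {G X Y : Type*} [Group G]
    [MulAction G X] [TopologicalSpace X] [TopologicalSpace Y] [T1Space Y]
    [ContinuousConstSMul G X]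
    (π : X → Y) (hπ : IsPseudoQuotient G π)
    (A : Set X) (hA : OrbitwiseClosed G A) (hAc : OrbitwiseClosed G Aᶜ) :
    π ⁻¹' (π '' A) = A := by
  ext x
  simp only [Set.mem_preimage, Set.mem_image]
  constructor
  · rintro ⟨a, ha, hax⟩
    by_contra hx
    have hx' : x ∈ Aᶜ := hx
    set W₁ := closure (MulAction.orbit G a) with hW₁
    set W₂ := closure (MulAction.orbit G x) with hW₂
    have hW₁inv : ∀ g : G, g • W₁ = W₁ := by
      intro g
      rw [hW₁, ← closure_smul, MulAction.smul_orbit]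
    have hW₂inv : ∀ g : G, g • W₂ = W₂ := by
      intro g
      rw [hW₂, ← closure_smul, MulAction.smul_orbit]
    have hdisj : Disjoint W₁ W₂ :=
      Set.disjoint_left.mpr fun z hz1 hz2 => hAc x hx' hz2 (hA a ha hz1)
    have hsep := hπ.separates W₁ W₂ isClosed_closure isClosed_closure hW₁inv hW₂inv hdisj
    have h1 : π a ∈ closure (π '' W₁) :=
      subset_closure ⟨a, subset_closure (MulAction.mem_orbit_self a), rfl⟩
    have h2 : π a ∈ closure (π '' W₂) :=
      subset_closure ⟨x, subset_closure (MulAction.mem_orbit_self x), hax.symm⟩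
    exact Set.disjoint_left.mp hsep h1 h2
  · intro hx
    exact ⟨x, hx, rfl⟩
end

section
/- Let π : X → Y be a pseudo-quotient for the action of G on X. If U ⊆ X is open and orbitwise-closed, then π(U) is open in Y and the restriction π|_U : U → π(U), where U and π(U) carry the subspace topologies and G acts on U by restriction, is a pseudo-quotient for the action of G on U. -/
open Pointwise

set_option linter.unusedSectionVars false

section Aux

open MulAction

variable {G X Y : Type*} [Group G] [MulAction G X] [TopologicalSpace X] [TopologicalSpace Y]
  [T1Space Y] [ContinuousConstSMul G X]

/-- The closure of an orbit is `G`-invariant. -/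
lemma aux_orbitClosure_inv (g : G) (x : X) :
    g • closure (MulAction.orbit G x) = closure (MulAction.orbit G x) := by
  rw [← closure_smul, MulAction.smul_orbit]

/-- Any invariant set has invariant closure. -/
lemma aux_closure_inv {A : Set X} (hA : ∀ g : G, g • A = A) (g : G) :
    g • closure A = closure A := by
  rw [← closure_smul, hA]

/-- `π` is constant on orbit closures. -/
lemma aux_pi_const {π : X → Y} (hπ : IsPseudoQuotient G π) (x : X) :
    ∀ z ∈ closure (MulAction.orbit G x), π z = π x := by
  intro z hz
  have h1 : π z ∈ closure ({π x} : Set Y) := by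
    refine map_mem_closure hπ.continuous hz ?_
    rintro _ ⟨g, rfl⟩
    simpa using hπ.invariant g x
  simpa using h1

/-- Key separation lemma: if `x ∈ U` (with `U` orbitwise closed) and `A` is an invariant
set whose closure meets `U` only inside `A`, and the orbit closure of `x` is disjoint
from `A`, then `π x` is not in the closure of `π(A)`. -/
lemma aux_sep {π : X → Y} (hπ : IsPseudoQuotient G π) {U : Set X} (hUoc : OrbitwiseClosed G U)
    {A : Set X} (hAi : ∀ g : G, g • A = A) (hAU : closure A ∩ U ⊆ A)
    {x : X} (hxU : x ∈ U) (hdisj : Disjoint (closure (MulAction.orbit G x)) A) :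
    π x ∉ closure (π '' A) := by
  set K := closure (MulAction.orbit G x) with hK
  have hKU : K ⊆ U := hUoc x hxU
  have hKA : Disjoint K (closure A) := by
    rw [Set.disjoint_left]
    intro z hzK hzA
    exact Set.disjoint_left.mp hdisj hzK (hAU ⟨hzA, hKU hzK⟩)
  have hsep := hπ.separates K (closure A) isClosed_closure isClosed_closure
    (fun g => aux_orbitClosure_inv g x) (aux_closure_inv hAi) hKA
  intro hmem
  have h1 : π x ∈ closure (π '' K) :=
    subset_closure ⟨x, subset_closure (MulAction.mem_orbit_self x), rfl⟩
  have h2 : π x ∈ closure (π '' closure A) :=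
    closure_mono (Set.image_mono (f := π) subset_closure) hmem
  exact Set.disjoint_left.mp hsep h1 h2

/-- If the orbit closures of two points are disjoint, their images under `π` differ. -/
lemma aux_ne {π : X → Y} (hπ : IsPseudoQuotient G π) {z₁ z₂ : X}
    (hd : Disjoint (closure (MulAction.orbit G z₁)) (closure (MulAction.orbit G z₂))) :
    π z₁ ≠ π z₂ := by
  have hsep := hπ.separates _ _ isClosed_closure isClosed_closure
    (fun g => aux_orbitClosure_inv g z₁) (fun g => aux_orbitClosure_inv g z₂) hd
  intro h
  have h1 : π z₁ ∈ closure (π '' closure (MulAction.orbit G z₁)) :=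
    subset_closure ⟨z₁, subset_closure (MulAction.mem_orbit_self z₁), rfl⟩
  have h2 : π z₁ ∈ closure (π '' closure (MulAction.orbit G z₂)) := by
    rw [h]
    exact subset_closure ⟨z₂, subset_closure (MulAction.mem_orbit_self z₂), rfl⟩
  exact Set.disjoint_left.mp hsep h1 h2

end Aux

/-- If `U` is open and orbitwise-closed, then `π(U)` is open and the restriction
`π|_U : U → π(U)` (with subspace topologies and restricted `G`-action) is a
pseudo-quotient. -/
theorem pseudoQuotient_restrict_open_orbitwiseClosed {G X Y : Type*} [Group G]
    [MulAction G X] [TopologicalSpace X] [TopologicalSpace Y] [T1Space Y]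
    [ContinuousConstSMul G X]
    (π : X → Y) (hπ : IsPseudoQuotient G π)
    (U : Set X) (hUo : IsOpen U) (hUoc : OrbitwiseClosed G U) :
    IsOpen (π '' U) ∧
    IsPseudoQuotient G
      (fun u : (⟨U, fun g {x} hx =>
          hUoc x hx (subset_closure (MulAction.mem_orbit x g))⟩ : SubMulAction G X) =>
        (⟨π u, Set.mem_image_of_mem π u.2⟩ : π '' U)) := by
  set S : SubMulAction G X := ⟨U, fun g {x} hx =>
    hUoc x hx (subset_closure (MulAction.mem_orbit x g))⟩ with hS
  -- invariance of U
  have hUinv : ∀ g : G, g • U = U := by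
    intro g
    apply Set.eq_of_subset_of_subset
    · rintro _ ⟨x, hx, rfl⟩
      exact hUoc x hx (subset_closure (MulAction.mem_orbit x g))
    · intro x hx
      exact ⟨g⁻¹ • x, hUoc x hx (subset_closure (MulAction.mem_orbit x g⁻¹)),
        smul_inv_smul g x⟩
  have hUcinv : ∀ g : G, g • Uᶜ = Uᶜ := by
    intro g
    rw [Set.smul_set_compl, hUinv]
  -- openness of π(U)
  have hopen : π '' U = (closure (π '' Uᶜ))ᶜ := by
    apply Set.eq_of_subset_of_subset
    · rintro _ ⟨x, hx, rfl⟩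
      have : π x ∉ closure (π '' Uᶜ) := by
        refine aux_sep hπ hUoc hUcinv ?_ hx ?_
        · rw [(isClosed_compl_iff.mpr hUo).closure_eq]
          exact Set.inter_subset_left
        · rw [Set.disjoint_compl_right_iff_subset]
          exact hUoc x hx
      exact this
    · intro y hy
      obtain ⟨x, rfl⟩ := hπ.surjective y
      by_cases hx : x ∈ U
      · exact ⟨x, hx, rfl⟩
      · exact absurd (subset_closure (Set.mem_image_of_mem π hx)) hy
  constructor
  · rw [hopen]
    exact isClosed_closure.isOpen_compl
  constructor
  -- continuity
  · exact (hπ.continuous.comp continuous_subtype_val).subtype_mk _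
  -- surjectivity
  · rintro ⟨y, x, hx, rfl⟩
    exact ⟨⟨x, hx⟩, rfl⟩
  -- invariance
  · intro g u
    exact Subtype.ext (hπ.invariant g u.1)
  -- separation
  · intro W₁ W₂ hW₁c hW₂c hW₁i hW₂i hd
    -- images in X
    set W₁' : Set X := Subtype.val '' W₁ with hW₁'
    set W₂' : Set X := Subtype.val '' W₂ with hW₂'
    have hsubU : ∀ (W : Set S), (Subtype.val '' W : Set X) ⊆ U := by
      rintro W _ ⟨u, _, rfl⟩; exact u.2
    -- closure property
    have hclos : ∀ (W : Set S), IsClosed W → closure (Subtype.val '' W : Set X) ∩ U ⊆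
        Subtype.val '' W := by
      intro W hW
      obtain ⟨C, hC, rfl⟩ := isClosed_induced_iff.mp hW
      rintro z ⟨hz1, hz2⟩
      refine ⟨⟨z, hz2⟩, ?_, rfl⟩
      have : closure (Subtype.val '' (Subtype.val ⁻¹' C : Set S) : Set X) ⊆ C := by
        rw [hC.closure_subset_iff]
        rintro _ ⟨u, hu, rfl⟩; exact hu
      exact this hz1
    -- invariance property
    have hinv : ∀ (W : Set S), (∀ g : G, g • W = W) →
        ∀ g : G, g • (Subtype.val '' W : Set X) = Subtype.val '' W := by
      intro W hW g
      apply Set.eq_of_subset_of_subset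
      · rintro _ ⟨_, ⟨u, hu, rfl⟩, rfl⟩
        have : g • u ∈ W := by rw [← hW g]; exact ⟨u, hu, rfl⟩
        exact ⟨g • u, this, rfl⟩
      · rintro _ ⟨u, hu, rfl⟩
        have h1 : g⁻¹ • u ∈ W := by rw [← hW g⁻¹]; exact ⟨u, hu, rfl⟩
        exact ⟨((g⁻¹ • u : S) : X), ⟨g⁻¹ • u, h1, rfl⟩, by
          simp [SubMulAction.val_smul, smul_inv_smul]⟩
    have hd' : Disjoint W₁' W₂' :=
      Set.disjoint_image_of_injective Subtype.val_injective hd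
    -- main argument
    rw [Set.disjoint_left]
    rintro ⟨y, hyU⟩ h1 h2
    obtain ⟨x, hxU, rfl⟩ := hyU
    -- push closures to Y
    have hpush : ∀ (W : Set S),
        (⟨π x, Set.mem_image_of_mem π hxU⟩ : π '' U) ∈
          closure ((fun u : S => (⟨π u, Set.mem_image_of_mem π u.2⟩ : π '' U)) '' W) →
        π x ∈ closure (π '' (Subtype.val '' W : Set X)) := by
      intro W hmem
      have := map_mem_closure continuous_subtype_val hmem
        (Set.mapsTo_image Subtype.val _)
      refine closure_mono ?_ this
      rintro _ ⟨_, ⟨u, hu, rfl⟩, rfl⟩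
      exact ⟨u, ⟨u, hu, rfl⟩, rfl⟩
    have h1' : π x ∈ closure (π '' W₁') := hpush W₁ h1
    have h2' : π x ∈ closure (π '' W₂') := hpush W₂ h2
    set K := closure (MulAction.orbit G x) with hK
    -- K must meet both W₁' and W₂'
    have hmeet : ∀ (W : Set S), IsClosed W → (∀ g : G, g • W = W) →
        π x ∈ closure (π '' (Subtype.val '' W : Set X)) →
        ∃ z, z ∈ K ∧ z ∈ (Subtype.val '' W : Set X) := by
      intro W hWc hWi hmem
      by_contra hcon
      push_neg at hcon
      have hdisj : Disjoint K (Subtype.val '' W : Set X) := by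
        rw [Set.disjoint_left]
        intro z hz hz'
        exact hcon z hz hz'
      exact aux_sep hπ hUoc (hinv W hWi) (hclos W hWc) hxU hdisj hmem
    obtain ⟨z₁, hz₁K, hz₁W⟩ := hmeet W₁ hW₁c hW₁i h1'
    obtain ⟨z₂, hz₂K, hz₂W⟩ := hmeet W₂ hW₂c hW₂i h2'
    -- orbit closures of z₁, z₂ lie in W₁', W₂'
    have horb : ∀ (W : Set S), IsClosed W → (∀ g : G, g • W = W) →
        ∀ z ∈ (Subtype.val '' W : Set X),
        closure (MulAction.orbit G z) ⊆ (Subtype.val '' W : Set X) := by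
      intro W hWc hWi z hz w hw
      refine hclos W hWc ⟨?_, hUoc z (hsubU W hz) hw⟩
      refine closure_mono ?_ hw
      rintro _ ⟨g, rfl⟩
      rw [← hinv W hWi g]
      exact Set.smul_mem_smul_set hz
    have hdz : Disjoint (closure (MulAction.orbit G z₁)) (closure (MulAction.orbit G z₂)) :=
      Set.disjoint_of_subset (horb W₁ hW₁c hW₁i z₁ hz₁W) (horb W₂ hW₂c hW₂i z₂ hz₂W) hd'
    exact aux_ne hπ hdz ((aux_pi_const hπ x z₁ hz₁K).trans (aux_pi_const hπ x z₂ hz₂K).symm)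
end

section
/- Let π : X → Y and π' : X → Y' be pseudo-quotients for the action of G on X, and suppose α : Y → Y' is a function satisfying π' = α ∘ π. Then α is bijective. -/
open Pointwise

/-- If `π : X → Y` and `π' : X → Y'` are pseudo-quotients for the same action and
`α : Y → Y'` satisfies `π' = α ∘ π`, then `α` is bijective. -/
theorem pseudoQuotient_comparison_bijective {G X Y Y' : Type*} [Group G] [MulAction G X]
    [TopologicalSpace X] [TopologicalSpace Y] [T1Space Y] [TopologicalSpace Y'] [T1Space Y']
    [ContinuousConstSMul G X]
    (π : X → Y) (π' : X → Y') (hπ : IsPseudoQuotient G π) (hπ' : IsPseudoQuotient G π')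
    (α : Y → Y') (hα : π' = α ∘ π) :
    Function.Bijective α := by
  constructor
  · -- injective
    intro y₁ y₂ hxy
    by_contra hne
    set W₁ : Set X := π ⁻¹' {y₁} with hW₁
    set W₂ : Set X := π ⁻¹' {y₂} with hW₂
    have hinv : ∀ y : Y, ∀ g : G, g • (π ⁻¹' {y}) = π ⁻¹' {y} := by
      intro y g
      ext x
      simp only [Set.mem_smul_set_iff_inv_smul_mem, Set.mem_preimage, Set.mem_singleton_iff,
        hπ.invariant]
    have hdisj : Disjoint W₁ W₂ := by
      rw [Set.disjoint_left]
      intro x h1 h2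
      exact hne (h1.symm.trans h2)
    have hsep := hπ'.separates W₁ W₂
      (isClosed_singleton.preimage hπ.continuous)
      (isClosed_singleton.preimage hπ.continuous)
      (hinv y₁) (hinv y₂) hdisj
    obtain ⟨x₁, hx₁⟩ := hπ.surjective y₁
    obtain ⟨x₂, hx₂⟩ := hπ.surjective y₂
    have m₁ : α y₁ ∈ closure (π' '' W₁) :=
      subset_closure ⟨x₁, by simp [hW₁, hx₁], by simp [hα, hx₁]⟩
    have m₂ : α y₁ ∈ closure (π' '' W₂) :=
      subset_closure ⟨x₂, by simp [hW₂, hx₂], by simp [hα, hx₂, hxy]⟩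
    exact Set.disjoint_left.mp hsep m₁ m₂
  · -- surjective
    intro y'
    obtain ⟨x, hx⟩ := hπ'.surjective y'
    exact ⟨π x, by rw [← hx, hα]; rfl⟩
end

section
/- Let π : X → X̄ be a pseudo-quotient for the action of G on X, and suppose X = Y ⊔ U is a partition where Y is closed and G-invariant and U is open and orbitwise-closed. Then X̄ is the disjoint union of π(Y) and π(U), the set π(U) is open in X̄, the set π(Y) is closed in X̄, and the restrictions π|_U : U → π(U) and π|_Y : Y → π(Y) (with subspace topologies and restricted G-actions) are pseudo-quotients. -/
open Pointwise

set_option linter.unusedSectionVars false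
set_option linter.unusedVariables false

section Helpers

variable {G X Xb : Type*} [Group G] [MulAction G X] [TopologicalSpace X]
  [TopologicalSpace Xb] [T1Space Xb] [ContinuousConstSMul G X]

lemma pq_inv_closure {s : Set X} (h : ∀ g : G, g • s = s) (g : G) :
    g • closure s = closure s := by
  rw [← closure_smul, h]

lemma pq_orbit_closure_inv (x : X) (g : G) :
    g • closure (MulAction.orbit G x) = closure (MulAction.orbit G x) := by
  rw [← closure_smul, MulAction.smul_orbit]

lemma pq_const_on_orbit_closure {π : X → Xb} (hπ : IsPseudoQuotient G π) (u : X)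
    {w : X} (hw : w ∈ closure (MulAction.orbit G u)) : π w = π u := by
  have h1 : π '' MulAction.orbit G u = {π u} := by
    ext z
    constructor
    · rintro ⟨w, ⟨g, rfl⟩, rfl⟩
      exact hπ.invariant g u
    · rintro rfl
      exact ⟨u, MulAction.mem_orbit_self u, rfl⟩
  have h2 : π w ∈ closure (π '' MulAction.orbit G u) :=
    image_closure_subset_closure_image hπ.continuous ⟨w, hw, rfl⟩
  rw [h1, closure_singleton] at h2
  exact h2

lemma pq_key {π : X → Xb} (hπ : IsPseudoQuotient G π) {U : Set X}
    (hUoc : OrbitwiseClosed G U) {W : Set X} (hWU : W ⊆ U)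
    (hWinv : ∀ g : G, g • W = W) (hWcl : closure W ∩ U ⊆ W)
    {u : X} (hu : u ∈ U) (hz : π u ∈ closure (π '' W)) :
    ∃ w, w ∈ closure (MulAction.orbit G u) ∧ w ∈ W := by
  set Z := closure (MulAction.orbit G u) with hZ
  have hZU : Z ⊆ U := hUoc u hu
  by_cases hmeet : (Z ∩ closure W).Nonempty
  · obtain ⟨w, hwZ, hwW⟩ := hmeet
    exact ⟨w, hwZ, hWcl ⟨hwW, hZU hwZ⟩⟩
  · exfalso
    have hdisj : Disjoint Z (closure W) :=
      Set.disjoint_iff_inter_eq_empty.2 (Set.not_nonempty_iff_eq_empty.1 hmeet)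
    have hsep := hπ.separates Z (closure W) isClosed_closure isClosed_closure
      (pq_orbit_closure_inv u) (pq_inv_closure hWinv) hdisj
    have h1 : π u ∈ closure (π '' Z) :=
      subset_closure ⟨u, subset_closure (MulAction.mem_orbit_self u), rfl⟩
    have h2 : π u ∈ closure (π '' closure W) :=
      closure_mono (Set.image_mono (f := π) subset_closure) hz
    exact Set.disjoint_left.1 hsep h1 h2

lemma pq_sep_U {π : X → Xb} (hπ : IsPseudoQuotient G π) {U : Set X}
    (hUoc : OrbitwiseClosed G U)
    {W₁ W₂ : Set X} (h1U : W₁ ⊆ U) (h2U : W₂ ⊆ U)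
    (h1inv : ∀ g : G, g • W₁ = W₁) (h2inv : ∀ g : G, g • W₂ = W₂)
    (h1cl : closure W₁ ∩ U ⊆ W₁) (h2cl : closure W₂ ∩ U ⊆ W₂)
    (hd : Disjoint W₁ W₂) {u : X} (hu : u ∈ U)
    (hz1 : π u ∈ closure (π '' W₁)) (hz2 : π u ∈ closure (π '' W₂)) : False := by
  obtain ⟨w₁, hw₁Z, hw₁⟩ := pq_key hπ hUoc h1U h1inv h1cl hu hz1
  have hpw₁ : π w₁ = π u := pq_const_on_orbit_closure hπ u hw₁Z
  obtain ⟨w, hwZ, hwW₂⟩ := pq_key hπ hUoc h2U h2inv h2cl (h1U hw₁) (hpw₁ ▸ hz2)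
  have horb : MulAction.orbit G w₁ ⊆ W₁ := by
    rintro x ⟨g, rfl⟩
    rw [← h1inv g]
    exact Set.smul_mem_smul_set hw₁
  have hwW₁ : w ∈ W₁ := h1cl ⟨closure_mono horb hwZ, h2U hwW₂⟩
  exact Set.disjoint_left.1 hd hwW₁ hwW₂

lemma pq_subtype_image_closed {X : Type*} [TopologicalSpace X] {p : X → Prop}
    {W : Set {x // p x}} (hW : IsClosed W) :
    closure (Subtype.val '' W) ∩ {x | p x} ⊆ Subtype.val '' W := by
  obtain ⟨C, hC, rfl⟩ := isClosed_induced_iff.mp hW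
  rw [Set.image_preimage_eq_inter_range, Subtype.range_coe_subtype]
  rintro x ⟨hx, hxS⟩
  exact ⟨hC.closure_subset (closure_mono Set.inter_subset_left hx), hxS⟩

lemma pq_image_smul (S : SubMulAction G X) (g : G) (W : Set S) :
    g • (Subtype.val '' W) = Subtype.val '' (g • W) := by
  ext x
  simp only [Set.mem_smul_set, Set.mem_image]
  constructor
  · rintro ⟨y, ⟨w, hw, rfl⟩, rfl⟩
    exact ⟨g • w, ⟨w, hw, rfl⟩, rfl⟩
  · rintro ⟨v, ⟨w, hw, rfl⟩, rfl⟩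
    exact ⟨w.val, ⟨w, hw, rfl⟩, rfl⟩

end Helpers

/-- If `π : X → X̄` is a pseudo-quotient and `X = Y ⊔ U` with `Y` closed `G`-invariant and
`U` open orbitwise-closed, then `X̄` is the disjoint union of the closed set `π(Y)` and the
open set `π(U)`, and both restrictions `π|_Y : Y → π(Y)` and `π|_U : U → π(U)` are
pseudo-quotients. -/
theorem pseudoQuotient_decomposition {G X Xb : Type*} [Group G] [MulAction G X]
    [TopologicalSpace X] [TopologicalSpace Xb] [T1Space Xb] [ContinuousConstSMul G X]
    (π : X → Xb) (hπ : IsPseudoQuotient G π)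
    (Y U : Set X)
    (hYc : IsClosed Y) (hYinv : ∀ g : G, g • Y = Y)
    (hUo : IsOpen U) (hUoc : OrbitwiseClosed G U)
    (hcover : Y ∪ U = Set.univ) (hdisj : Disjoint Y U) :
    (π '' Y ∪ π '' U = Set.univ ∧ Disjoint (π '' Y) (π '' U)) ∧
    IsOpen (π '' U) ∧ IsClosed (π '' Y) ∧
    IsPseudoQuotient G
      (fun u : (⟨U, fun g {x} hx =>
          hUoc x hx (subset_closure (MulAction.mem_orbit x g))⟩ : SubMulAction G X) =>
        (⟨π u, Set.mem_image_of_mem π u.2⟩ : π '' U)) ∧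
    IsPseudoQuotient G
      (fun w : (⟨Y, fun g {x} hx => by
          rw [← hYinv g]; exact Set.smul_mem_smul_set hx⟩ : SubMulAction G X) =>
        (⟨π w, Set.mem_image_of_mem π w.2⟩ : π '' Y)) := by
  have hYkey : ∀ u ∈ U, π u ∉ closure (π '' Y) := by
    intro u hu hmem
    have hZU : closure (MulAction.orbit G u) ⊆ U := hUoc u hu
    have hsep := hπ.separates Y (closure (MulAction.orbit G u)) hYc isClosed_closure
      hYinv (pq_orbit_closure_inv u) (hdisj.mono_right hZU)
    exact Set.disjoint_left.1 hsep hmem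
      (subset_closure ⟨u, subset_closure (MulAction.mem_orbit_self u), rfl⟩)
  have hdisjb : Disjoint (π '' Y) (π '' U) := by
    rw [Set.disjoint_right]
    rintro z ⟨u, hu, rfl⟩ hzY
    exact hYkey u hu (subset_closure hzY)
  have hcoverb : π '' Y ∪ π '' U = Set.univ := by
    rw [← Set.image_union, hcover, Set.image_univ, hπ.surjective.range_eq]
  have hYclosed : IsClosed (π '' Y) := by
    refine isClosed_of_closure_subset ?_
    intro z hz
    obtain ⟨x, rfl⟩ := hπ.surjective z
    have hx : x ∈ Y ∪ U := hcover ▸ Set.mem_univ x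
    rcases hx with h | h
    · exact ⟨x, h, rfl⟩
    · exact absurd hz (hYkey x h)
  have hUc : π '' U = (π '' Y)ᶜ := by
    ext z
    constructor
    · intro hzU hzY
      exact Set.disjoint_left.1 hdisjb hzY hzU
    · intro hz
      rcases (hcoverb ▸ Set.mem_univ z : z ∈ π '' Y ∪ π '' U) with h | h
      · exact absurd h hz
      · exact h
  have hUopen : IsOpen (π '' U) := by
    rw [hUc]; exact hYclosed.isOpen_compl
  refine ⟨⟨hcoverb, hdisjb⟩, hUopen, hYclosed, ?_, ?_⟩
  · -- restriction to U
    set SU : SubMulAction G X := ⟨U, fun g {x} hx =>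
      hUoc x hx (subset_closure (MulAction.mem_orbit x g))⟩ with hSU
    refine ⟨(hπ.continuous.comp continuous_subtype_val).subtype_mk _, ?_, ?_, ?_⟩
    · rintro ⟨z, hz⟩
      obtain ⟨x, hxU, rfl⟩ := hz
      exact ⟨⟨x, hxU⟩, rfl⟩
    · intro g x
      exact Subtype.ext (hπ.invariant g x.val)
    · intro W₁ W₂ hW₁c hW₂c h1inv h2inv hd
      rw [Set.disjoint_left]
      intro z hz1 hz2
      rw [closure_subtype] at hz1 hz2
      have himg : ∀ W : Set SU,
          Subtype.val '' ((fun u : SU => (⟨π u, Set.mem_image_of_mem π u.2⟩ : π '' U)) '' W)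
            = π '' (Subtype.val '' W) := by
        intro W
        rw [← Set.image_comp, ← Set.image_comp]
        rfl
      rw [himg] at hz1 hz2
      obtain ⟨u, hu, hval⟩ := z.2
      rw [← hval] at hz1 hz2
      have hsubU : ∀ W : Set SU, Subtype.val '' W ⊆ U := by
        rintro W x ⟨w, hw, rfl⟩
        exact w.2
      have hinv' : ∀ (W : Set SU), (∀ g : G, g • W = W) →
          ∀ g : G, g • (Subtype.val '' W) = Subtype.val '' W := by
        intro W hW g
        rw [pq_image_smul, hW g]
      have hcl' : ∀ {W : Set SU}, IsClosed W →
          closure (Subtype.val '' W) ∩ U ⊆ Subtype.val '' W := fun hW =>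
        pq_subtype_image_closed hW
      exact pq_sep_U hπ hUoc (hsubU W₁) (hsubU W₂) (hinv' W₁ h1inv) (hinv' W₂ h2inv)
        (hcl' hW₁c) (hcl' hW₂c)
        (Set.disjoint_image_of_injective Subtype.val_injective hd) hu hz1 hz2
  · -- restriction to Y
    set SY : SubMulAction G X := ⟨Y, fun g {x} hx => by
      rw [← hYinv g]; exact Set.smul_mem_smul_set hx⟩ with hSY
    refine ⟨(hπ.continuous.comp continuous_subtype_val).subtype_mk _, ?_, ?_, ?_⟩
    · rintro ⟨z, hz⟩
      obtain ⟨x, hxY, rfl⟩ := hz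
      exact ⟨⟨x, hxY⟩, rfl⟩
    · intro g x
      exact Subtype.ext (hπ.invariant g x.val)
    · intro W₁ W₂ hW₁c hW₂c h1inv h2inv hd
      rw [Set.disjoint_left]
      intro z hz1 hz2
      rw [closure_subtype] at hz1 hz2
      have himg : ∀ W : Set SY,
          Subtype.val '' ((fun w : SY => (⟨π w, Set.mem_image_of_mem π w.2⟩ : π '' Y)) '' W)
            = π '' (Subtype.val '' W) := by
        intro W
        rw [← Set.image_comp, ← Set.image_comp]
        rfl
      rw [himg] at hz1 hz2
      have himage_closed : ∀ {W : Set SY}, IsClosed W → IsClosed (Subtype.val '' W) := by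
        intro W hW
        obtain ⟨C, hC, rfl⟩ := isClosed_induced_iff.mp hW
        rw [Set.image_preimage_eq_inter_range, Subtype.range_val]
        exact hC.inter hYc
      have hinv' : ∀ (W : Set SY), (∀ g : G, g • W = W) →
          ∀ g : G, g • (Subtype.val '' W) = Subtype.val '' W := by
        intro W hW g
        rw [pq_image_smul, hW g]
      have hsep := hπ.separates (Subtype.val '' W₁) (Subtype.val '' W₂)
        (himage_closed hW₁c) (himage_closed hW₂c) (hinv' W₁ h1inv) (hinv' W₂ h2inv)
        (Set.disjoint_image_of_injective Subtype.val_injective hd)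
      exact Set.disjoint_left.1 hsep hz1 hz2
end

section
/- Let π : X → X̄ be a pseudo-quotient for the action of G on X. Let Y ⊆ X be a subset and H ⊆ G a subgroup with h·Y = Y for all h ∈ H, satisfying: (i) for every a ∈ Y, the closure in X of the H-orbit H·a is contained in Y; (ii) for every x ∈ X, the closure in X of the orbit G·x intersects Y; (iii) for any two H-invariant subsets W₁, W₂ ⊆ Y that are closed in the subspace topology of Y, one has W₁ ∩ W₂ = ∅ if and only if the closures in X of G·W₁ and G·W₂ are disjoint. Then the restriction π|_Y : Y → X̄ is a pseudo-quotient for the action of H on Y; in particular, π|_Y is surjective onto X̄. -/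
open Pointwise

/-- If `(Y, H)` is a core for the action of `G` on `X` (hypotheses `h1`, `h2`, `h3`) and
`π : X → X̄` is a pseudo-quotient for the action of `G`, then the restriction
`π|_Y : Y → X̄` is a pseudo-quotient for the action of `H` on `Y`; in particular it is
surjective onto `X̄`. -/
theorem pseudoQuotient_core {G X Xb : Type*} [Group G] [MulAction G X]
    [TopologicalSpace X] [TopologicalSpace Xb] [T1Space Xb] [ContinuousConstSMul G X]
    (π : X → Xb) (hπ : IsPseudoQuotient G π)
    (Y : Set X) (H : Subgroup G) (hY : ∀ h : H, h • Y = Y)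
    (h1 : ∀ a ∈ Y, closure (MulAction.orbit H a) ⊆ Y)
    (h2 : ∀ x : X, (closure (MulAction.orbit G x) ∩ Y).Nonempty)
    (h3 : ∀ W₁ W₂ : Set X, W₁ ⊆ Y → W₂ ⊆ Y →
      IsClosed (Subtype.val ⁻¹' W₁ : Set Y) → IsClosed (Subtype.val ⁻¹' W₂ : Set Y) →
      (∀ h : H, h • W₁ = W₁) → (∀ h : H, h • W₂ = W₂) →
      (W₁ ∩ W₂ = ∅ ↔ Disjoint (closure (⋃ g : G, g • W₁)) (closure (⋃ g : G, g • W₂)))) :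
    IsPseudoQuotient H
      (fun y : (⟨Y, fun h {x} hx => by
          rw [← hY h]; exact Set.smul_mem_smul_set hx⟩ : SubMulAction H X) =>
        π y) := by
  constructor
  · exact hπ.continuous.comp continuous_subtype_val
  · intro xb
    obtain ⟨x, rfl⟩ := hπ.surjective xb
    obtain ⟨y, hyc, hyY⟩ := h2 x
    refine ⟨⟨y, hyY⟩, ?_⟩
    have himg : π '' MulAction.orbit G x ⊆ {π x} := by
      rintro _ ⟨_, ⟨g, rfl⟩, rfl⟩
      simp [hπ.invariant]
    have hmem : π y ∈ closure ({π x} : Set Xb) := by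
      have h1' : π y ∈ closure (π '' MulAction.orbit G x) :=
        (image_closure_subset_closure_image hπ.continuous) ⟨y, hyc, rfl⟩
      exact closure_mono himg h1'
    simpa [isClosed_singleton.closure_eq] using hmem
  · intro h y
    exact hπ.invariant (h : G) (y : X)
  · intro W₁' W₂' hc1 hc2 hi1 hi2 hd
    set W₁ : Set X := Subtype.val '' W₁' with hW₁
    set W₂ : Set X := Subtype.val '' W₂' with hW₂
    have hsub₁ : W₁ ⊆ Y := by rintro _ ⟨w, _, rfl⟩; exact w.2
    have hsub₂ : W₂ ⊆ Y := by rintro _ ⟨w, _, rfl⟩; exact w.2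
    have hpre₁ : (Subtype.val ⁻¹' W₁ : Set Y) = W₁' :=
      Set.preimage_image_eq _ Subtype.val_injective
    have hpre₂ : (Subtype.val ⁻¹' W₂ : Set Y) = W₂' :=
      Set.preimage_image_eq _ Subtype.val_injective
    have hinv₁ : ∀ h : H, h • W₁ = W₁ := by
      intro h
      ext z
      simp only [Set.mem_smul_set, Set.mem_image, hW₁]
      constructor
      · rintro ⟨_, ⟨w, hw, rfl⟩, rfl⟩
        refine ⟨h • w, ?_, rfl⟩
        rw [← hi1 h]; exact Set.smul_mem_smul_set hw
      · rintro ⟨w, hw, rfl⟩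
        rw [← hi1 h] at hw
        obtain ⟨w', hw', rfl⟩ := hw
        exact ⟨w'.1, ⟨w', hw', rfl⟩, rfl⟩
    have hinv₂ : ∀ h : H, h • W₂ = W₂ := by
      intro h
      ext z
      simp only [Set.mem_smul_set, Set.mem_image, hW₂]
      constructor
      · rintro ⟨_, ⟨w, hw, rfl⟩, rfl⟩
        refine ⟨h • w, ?_, rfl⟩
        rw [← hi2 h]; exact Set.smul_mem_smul_set hw
      · rintro ⟨w, hw, rfl⟩
        rw [← hi2 h] at hw
        obtain ⟨w', hw', rfl⟩ := hw
        exact ⟨w'.1, ⟨w', hw', rfl⟩, rfl⟩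
    have hdisj : W₁ ∩ W₂ = ∅ := by
      rw [← Set.disjoint_iff_inter_eq_empty, hW₁, hW₂,
        Set.disjoint_image_iff Subtype.val_injective]
      exact hd
    have key := (h3 W₁ W₂ hsub₁ hsub₂ (hpre₁ ▸ hc1) (hpre₂ ▸ hc2) hinv₁ hinv₂).mp hdisj
    have hGinv : ∀ W : Set X, ∀ g : G,
        g • closure (⋃ g' : G, g' • W) = closure (⋃ g' : G, g' • W) := by
      intro W g
      rw [← closure_smul, Set.smul_set_iUnion]
      refine congrArg closure (Set.eq_of_subset_of_subset ?_ ?_)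
      · refine Set.iUnion_subset fun g' => ?_
        rw [smul_smul]
        exact Set.subset_iUnion (fun k : G => k • W) (g * g')
      · refine Set.iUnion_subset fun g' => ?_
        have hgg : g' • W = g • (g⁻¹ * g') • W := by rw [smul_smul, mul_inv_cancel_left]
        rw [hgg]
        exact Set.subset_iUnion (fun k : G => g • k • W) (g⁻¹ * g')
    have sep := hπ.separates (closure (⋃ g : G, g • W₁)) (closure (⋃ g : G, g • W₂))
      isClosed_closure isClosed_closure (hGinv W₁) (hGinv W₂) key
    refine sep.mono ?_ ?_
    · refine closure_mono ?_
      rintro _ ⟨w, hw, rfl⟩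
      exact ⟨w.1, subset_closure (Set.mem_iUnion.mpr
        ⟨1, by rw [one_smul]; exact ⟨w, hw, rfl⟩⟩), rfl⟩
    · refine closure_mono ?_
      rintro _ ⟨w, hw, rfl⟩
      exact ⟨w.1, subset_closure (Set.mem_iUnion.mpr
        ⟨1, by rw [one_smul]; exact ⟨w, hw, rfl⟩⟩), rfl⟩
end

section
/- Let f₁, …, f_r be polynomials in n variables over ℂ, and let W ⊆ SL₂(ℂ)ⁿ be the set of tuples (D_{λ₁}, …, D_{λₙ}) of diagonal matrices with λ₁, …, λₙ ∈ ℂ* and fⱼ(λ₁, …, λₙ) = 0 for all j. If a tuple A ∈ SL₂(ℂ)ⁿ lies in the closure, in the analytic topology, of the set {(PB₁P⁻¹, …, PBₙP⁻¹) : P ∈ SL₂(ℂ), (B₁, …, Bₙ) ∈ W}, then the closure in the analytic topology of the conjugation orbit of A intersects W. -/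
/-- The diagonal matrix `D_λ ∈ SL₂(ℂ)` with diagonal entries `λ, λ⁻¹`. -/
noncomputable def diagSL (l : ℂˣ) : Matrix.SpecialLinearGroup (Fin 2) ℂ :=
  ⟨!![(l : ℂ), 0; 0, ((l⁻¹ : ℂˣ) : ℂ)], by
    simp [Matrix.det_fin_two_of, ← Units.val_mul]⟩

/-- The upper triangular matrix in `SL₂(ℂ)` with diagonal entries `λ, λ⁻¹` and upper
right entry `α`. -/
noncomputable def triSL (l : ℂˣ) (a : ℂ) : Matrix.SpecialLinearGroup (Fin 2) ℂ :=
  ⟨!![(l : ℂ), a; 0, ((l⁻¹ : ℂˣ) : ℂ)], by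
    simp [Matrix.det_fin_two_of, ← Units.val_mul]⟩

open Matrix Filter Topology

local notation "SL2" => Matrix.SpecialLinearGroup (Fin 2) ℂ
local notation "M2" => Matrix (Fin 2) (Fin 2) ℂ


lemma collin {v w : Fin 2 → ℂ} (hv : v ≠ 0) (h : v 0 * w 1 = v 1 * w 0) :
    ∃ c : ℂ, w = c • v := by
  by_cases h0 : v 0 = 0
  · have h1 : v 1 ≠ 0 := by
      intro h1; apply hv; funext i; fin_cases i <;> simp [h0, h1]
    refine ⟨w 1 / v 1, ?_⟩
    funext i; fin_cases i
    · have : w 0 = 0 := by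
        have := h; rw [h0] at this; simp at this
        rcases this with h' | h' <;> [skip; exact h']
        exact absurd h' h1
      simp [this, h0]
    · simp only [Fin.mk_one, Pi.smul_apply, smul_eq_mul]; field_simp
  · refine ⟨w 0 / v 0, ?_⟩
    funext i; fin_cases i
    · simp only [Fin.zero_eta, Pi.smul_apply, smul_eq_mul]; field_simp
    · simp only [Fin.mk_one, Pi.smul_apply, smul_eq_mul]
      field_simp
      linear_combination h

lemma exists_eigenpair (M : M2) : ∃ (c : ℂ) (v : Fin 2 → ℂ), v ≠ 0 ∧ M *ᵥ v = c • v := by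
  obtain ⟨c, hc⟩ := Module.End.exists_eigenvalue (Matrix.toLin' M)
  obtain ⟨v, hv⟩ := hc.exists_hasEigenvector
  refine ⟨c, v, hv.right, ?_⟩
  have := hv.apply_eq_smul
  rwa [Matrix.toLin'_apply] at this

lemma exists_common_eigvec {n : ℕ} (A : Fin n → M2)
    (hcomm : ∀ i j, A i * A j = A j * A i) :
    ∃ v : Fin 2 → ℂ, v ≠ 0 ∧ ∀ i, ∃ c : ℂ, A i *ᵥ v = c • v := by
  by_cases hs : ∀ i, ∃ c : ℂ, A i = c • (1 : M2)
  · refine ⟨![1, 0], by intro h; simpa using congrFun h 0, fun i => ?_⟩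
    obtain ⟨c, hc⟩ := hs i
    exact ⟨c, by rw [hc, Matrix.smul_mulVec, Matrix.one_mulVec]⟩
  · push_neg at hs
    obtain ⟨i₀, hi₀⟩ := hs
    obtain ⟨c, v, hv, hev⟩ := exists_eigenpair (A i₀)
    refine ⟨v, hv, fun j => ?_⟩
    have hw : A i₀ *ᵥ (A j *ᵥ v) = c • (A j *ᵥ v) := by
      rw [Matrix.mulVec_mulVec, hcomm i₀ j, ← Matrix.mulVec_mulVec, hev,
        Matrix.mulVec_smul]
    set w := A j *ᵥ v with hwdef
    by_contra hno
    push_neg at hno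
    have hdet : v 0 * w 1 - v 1 * w 0 ≠ 0 := by
      intro hd
      obtain ⟨c', hc'⟩ := collin (w := w) hv (by linear_combination hd)
      exact hno c' hc'
    set N : M2 := !![v 0, w 0; v 1, w 1] with hN
    have hdetN : IsUnit N.det := by
      rw [isUnit_iff_ne_zero, hN, Matrix.det_fin_two_of]
      intro h; apply hdet; linear_combination h
    have hev' : ∀ i, A i₀ i 0 * v 0 + A i₀ i 1 * v 1 = c * v i := fun i => by
      have := congrFun hev i
      simpa [Matrix.mulVec, dotProduct, Fin.sum_univ_two] using this
    have hw' : ∀ i, A i₀ i 0 * w 0 + A i₀ i 1 * w 1 = c * w i := fun i => by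
      have := congrFun hw i
      simpa [Matrix.mulVec, dotProduct, Fin.sum_univ_two] using this
    have hAN : A i₀ * N = c • N := by
      ext i k
      fin_cases i <;> fin_cases k <;>
        simp [hN, Matrix.mul_apply, Fin.sum_univ_two] <;>
        [exact hev' 0; exact hw' 0; exact hev' 1; exact hw' 1]
    have : A i₀ = c • (1 : M2) := by
      calc A i₀ = A i₀ * N * N⁻¹ := by
            rw [Matrix.mul_assoc, Matrix.mul_nonsing_inv _ hdetN, Matrix.mul_one]
        _ = (c • N) * N⁻¹ := by rw [hAN]
        _ = c • (N * N⁻¹) := by rw [Matrix.smul_mul]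
        _ = c • (1 : M2) := by rw [Matrix.mul_nonsing_inv _ hdetN]
    exact hi₀ c this

lemma triSL_coe (l : ℂˣ) (a : ℂ) :
    (↑(triSL l a) : M2) = !![(l : ℂ), a; 0, ((l : ℂ))⁻¹] := by
  simp [triSL]

lemma diagSL_eq (l : ℂˣ) : diagSL l = triSL l 0 := by
  apply Subtype.ext; simp [diagSL, triSL]

lemma exists_sl2_firstcol {v : Fin 2 → ℂ} (hv : v ≠ 0) :
    ∃ R : SL2, (↑R : M2) *ᵥ ![1, 0] = v := by
  by_cases h0 : v 0 = 0
  · have h1 : v 1 ≠ 0 := by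
      intro h1; apply hv; funext i; fin_cases i <;> simp [h0, h1]
    refine ⟨⟨!![0, -(v 1)⁻¹; v 1, 0], by
      simp [Matrix.det_fin_two_of]; field_simp⟩, ?_⟩
    funext i; fin_cases i <;>
      simp [Matrix.mulVec, dotProduct, Fin.sum_univ_two, h0]
  · refine ⟨⟨!![v 0, 0; v 1, (v 0)⁻¹], by
      simp [Matrix.det_fin_two_of]; field_simp⟩, ?_⟩
    funext i; fin_cases i <;>
      simp [Matrix.mulVec, dotProduct, Fin.sum_univ_two]

lemma sl2_coe_inv_mul (R : SL2) : (↑(R⁻¹) : M2) * (↑R : M2) = 1 := by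
  rw [← Matrix.SpecialLinearGroup.coe_mul, inv_mul_cancel,
    Matrix.SpecialLinearGroup.coe_one]

lemma exists_tri {n : ℕ} (A : Fin n → SL2)
    (hcomm : ∀ i j, (↑(A i) : M2) * (↑(A j) : M2) = (↑(A j) : M2) * (↑(A i) : M2)) :
    ∃ (Q : SL2) (l : Fin n → ℂˣ) (a : Fin n → ℂ),
      ∀ i, Q * A i * Q⁻¹ = triSL (l i) (a i) := by
  obtain ⟨v, hv, hev⟩ := exists_common_eigvec (fun i => (↑(A i) : M2)) hcomm
  choose c hc using hev
  obtain ⟨R, hR⟩ := exists_sl2_firstcol hv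
  have hc0 : ∀ i, c i ≠ 0 := by
    intro i h
    apply hv
    have h2 : (↑(A i) : M2) *ᵥ v = 0 := by rw [hc i, h, zero_smul]
    calc v = ((↑((A i)⁻¹) : M2) * (↑(A i) : M2)) *ᵥ v := by
            rw [sl2_coe_inv_mul, Matrix.one_mulVec]
      _ = (↑((A i)⁻¹) : M2) *ᵥ ((↑(A i) : M2) *ᵥ v) := by rw [Matrix.mulVec_mulVec]
      _ = 0 := by rw [h2, Matrix.mulVec_zero]
  have key : ∀ i, ∀ j, (↑(R⁻¹ * A i * R) : M2) j 0 = c i * ![1, 0] j := by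
    intro i
    have hcol : (↑(R⁻¹ * A i * R) : M2) *ᵥ ![1, 0] = c i • ![1, 0] := by
      have e1 : (↑(R⁻¹ * A i * R) : M2) = (↑(R⁻¹) : M2) * (↑(A i) : M2) * (↑R : M2) := by
        simp [Matrix.SpecialLinearGroup.coe_mul]
      rw [e1, ← Matrix.mulVec_mulVec, ← Matrix.mulVec_mulVec, hR, hc i,
        Matrix.mulVec_smul]
      congr 1
      rw [← hR, Matrix.mulVec_mulVec, sl2_coe_inv_mul, Matrix.one_mulVec]
    intro j
    have := congrFun hcol j
    simpa [Matrix.mulVec, dotProduct, Fin.sum_univ_two] using this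
  refine ⟨R⁻¹, fun i => Units.mk0 (c i) (hc0 i),
    fun i => (↑(R⁻¹ * A i * R) : M2) 0 1, fun i => ?_⟩
  have h00 : (↑(R⁻¹ * A i * R) : M2) 0 0 = c i := by simpa using key i 0
  have h10 : (↑(R⁻¹ * A i * R) : M2) 1 0 = 0 := by simpa using key i 1
  have hdet : (↑(R⁻¹ * A i * R) : M2).det = 1 := (R⁻¹ * A i * R).2
  rw [Matrix.det_fin_two, h00, h10] at hdet
  have h11 : (↑(R⁻¹ * A i * R) : M2) 1 1 = (c i)⁻¹ :=
    eq_inv_of_mul_eq_one_left (by linear_combination hdet)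
  rw [inv_inv]
  apply Subtype.ext
  rw [triSL_coe]
  ext j k
  fin_cases j <;> fin_cases k <;>
    simp [h00, h10, h11]


noncomputable def wSL : Matrix.SpecialLinearGroup (Fin 2) ℂ :=
  ⟨!![0, 1; -1, 0], by simp [Matrix.det_fin_two_of]⟩

lemma diagSL_inv_coe (t : ℂˣ) :
    (↑((diagSL t)⁻¹) : M2) = !![((t : ℂ))⁻¹, 0; 0, (t : ℂ)] := by
  rw [Matrix.SpecialLinearGroup.coe_inv, Matrix.adjugate_fin_two]
  simp [diagSL]

lemma conjA (t l : ℂˣ) (a : ℂ) :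
    diagSL t * triSL l a * (diagSL t)⁻¹ = triSL l ((t : ℂ) ^ 2 * a) := by
  apply Subtype.ext
  rw [Matrix.SpecialLinearGroup.coe_mul, Matrix.SpecialLinearGroup.coe_mul,
    diagSL_inv_coe]
  show (!![(t : ℂ), 0; 0, ((t⁻¹ : ℂˣ) : ℂ)] * !![(l : ℂ), a; 0, ((l⁻¹ : ℂˣ) : ℂ)]) *
      !![((t : ℂ))⁻¹, 0; 0, (t : ℂ)] = !![(l : ℂ), (t : ℂ) ^ 2 * a; 0, ((l⁻¹ : ℂˣ) : ℂ)]
  rw [Matrix.mul_fin_two, Matrix.mul_fin_two]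
  have ht : (t : ℂ) ≠ 0 := t.ne_zero
  ext i j
  fin_cases i <;> fin_cases j <;> (try simp) <;> (try field_simp) <;> (try ring)

lemma conjB (t l : ℂˣ) (a : ℂ) :
    (↑(diagSL t * (wSL * triSL l a * wSL⁻¹) * (diagSL t)⁻¹) : M2) =
      !![((l : ℂ))⁻¹, 0; -(((t : ℂ))⁻¹ ^ 2 * a), (l : ℂ)] := by
  have hw : (↑(wSL⁻¹) : M2) = !![0, -1; 1, 0] := by
    rw [Matrix.SpecialLinearGroup.coe_inv, Matrix.adjugate_fin_two]
    simp [wSL]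
  rw [Matrix.SpecialLinearGroup.coe_mul, Matrix.SpecialLinearGroup.coe_mul,
    Matrix.SpecialLinearGroup.coe_mul, Matrix.SpecialLinearGroup.coe_mul,
    diagSL_inv_coe, hw]
  show (!![(t : ℂ), 0; 0, ((t⁻¹ : ℂˣ) : ℂ)] *
      (!![0, 1; -1, 0] * !![(l : ℂ), a; 0, ((l⁻¹ : ℂˣ) : ℂ)] * !![0, -1; 1, 0])) *
      !![((t : ℂ))⁻¹, 0; 0, (t : ℂ)] = _
  rw [Matrix.mul_fin_two, Matrix.mul_fin_two, Matrix.mul_fin_two, Matrix.mul_fin_two]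
  have ht : (t : ℂ) ≠ 0 := t.ne_zero
  have hl : (l : ℂ) ≠ 0 := l.ne_zero
  ext i j
  fin_cases i <;> fin_cases j <;> (try simp) <;> (try field_simp) <;> (try ring) <;>
    (try tauto)

lemma trace_triSL_mul (l l' : ℂˣ) (a a' : ℂ) :
    ((↑(triSL l a) : M2) * (↑(triSL l' a') : M2)).trace =
      (l : ℂ) * (l' : ℂ) + ((l : ℂ) * (l' : ℂ))⁻¹ := by
  show (!![(l : ℂ), a; 0, ((l⁻¹ : ℂˣ) : ℂ)] * !![(l' : ℂ), a'; 0, ((l'⁻¹ : ℂˣ) : ℂ)]).trace = _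
  rw [Matrix.mul_fin_two, Matrix.trace_fin_two]
  simp [mul_inv]
  ring

lemma trace_triSL (l : ℂˣ) (a : ℂ) :
    (↑(triSL l a) : M2).trace = (l : ℂ) + ((l : ℂ))⁻¹ := by
  show (!![(l : ℂ), a; 0, ((l⁻¹ : ℂˣ) : ℂ)]).trace = _
  rw [Matrix.trace_fin_two]
  simp

lemma traceConjSL (P X : SL2) :
    (↑(P * X * P⁻¹) : M2).trace = (↑X : M2).trace := by
  rw [Matrix.SpecialLinearGroup.coe_mul, Matrix.SpecialLinearGroup.coe_mul,
    Matrix.trace_mul_comm, ← Matrix.mul_assoc, ← Matrix.SpecialLinearGroup.coe_mul,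
    inv_mul_cancel, Matrix.SpecialLinearGroup.coe_one, Matrix.one_mul]

lemma diagSL_comm (m m' : ℂˣ) : diagSL m * diagSL m' = diagSL m' * diagSL m := by
  apply Subtype.ext
  rw [Matrix.SpecialLinearGroup.coe_mul, Matrix.SpecialLinearGroup.coe_mul]
  show !![(m : ℂ), 0; 0, ((m⁻¹ : ℂˣ) : ℂ)] * !![(m' : ℂ), 0; 0, ((m'⁻¹ : ℂˣ) : ℂ)] =
    !![(m' : ℂ), 0; 0, ((m'⁻¹ : ℂˣ) : ℂ)] * !![(m : ℂ), 0; 0, ((m⁻¹ : ℂˣ) : ℂ)]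
  rw [Matrix.mul_fin_two, Matrix.mul_fin_two]
  ext i j; fin_cases i <;> fin_cases j <;> simp <;> ring

lemma trace_diagSL_mul (m m' : ℂˣ) :
    ((↑(diagSL m) : M2) * (↑(diagSL m') : M2)).trace =
      (m : ℂ) * (m' : ℂ) + ((m : ℂ) * (m' : ℂ))⁻¹ := by
  have := trace_triSL_mul m m' 0 0
  rwa [show diagSL m = triSL m 0 from Subtype.ext (by simp [diagSL, triSL]),
    show diagSL m' = triSL m' 0 from Subtype.ext (by simp [diagSL, triSL])]

lemma tendsto_inv_nat : Tendsto (fun k : ℕ => ((k : ℂ) + 1)⁻¹) atTop (𝓝 0) := by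
  rw [tendsto_zero_iff_norm_tendsto_zero]
  have h : ∀ k : ℕ, ‖((k : ℂ) + 1)⁻¹‖ = 1 / ((k : ℝ) + 1) := by
    intro k
    rw [show ((k : ℂ) + 1) = ((k + 1 : ℕ) : ℂ) by push_cast; ring, norm_inv,
      Complex.norm_natCast]
    push_cast
    ring
  simp_rw [h]
  exact tendsto_one_div_add_atTop_nhds_zero_nat

lemma norm_le_of_add_inv {x : ℂ} {C : ℝ} (hx : x ≠ 0) (h : ‖x + x⁻¹‖ ≤ C) :
    ‖x‖ ≤ max 1 (C + 1) := by
  by_contra hgt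
  push_neg at hgt
  have h1 : (1 : ℝ) < ‖x‖ := lt_of_le_of_lt (le_max_left _ _) hgt
  have h2 : C + 1 < ‖x‖ := lt_of_le_of_lt (le_max_right _ _) hgt
  have hC0 : 0 ≤ C := le_trans (norm_nonneg _) h
  have hx2 : x * x = x * (x + x⁻¹) - 1 := by field_simp; try ring
  have hb : ‖x‖ * ‖x‖ ≤ ‖x‖ * C + 1 := by
    calc ‖x‖ * ‖x‖ = ‖x * x‖ := (norm_mul _ _).symm
      _ = ‖x * (x + x⁻¹) - 1‖ := by rw [hx2]
      _ ≤ ‖x * (x + x⁻¹)‖ + ‖(1 : ℂ)‖ := norm_sub_le _ _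
      _ = ‖x‖ * ‖x + x⁻¹‖ + 1 := by rw [norm_mul, norm_one]
      _ ≤ ‖x‖ * C + 1 := by
          have := mul_le_mul_of_nonneg_left h (norm_nonneg x)
          linarith
  nlinarith

lemma eq_or_eq_inv {x y : ℂ} (hx : x ≠ 0) (hy : y ≠ 0) (h : x + x⁻¹ = y + y⁻¹) :
    x = y ∨ x = y⁻¹ := by
  have hxx : x * x⁻¹ = 1 := mul_inv_cancel₀ hx
  have hyy : y * y⁻¹ = 1 := mul_inv_cancel₀ hy
  have h2 : (x - y) * (x * y - 1) = 0 := by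
    linear_combination (x * y) * h - y * hxx + x * hyy
  rcases mul_eq_zero.1 h2 with h3 | h3
  · left; linear_combination h3
  · right
    exact eq_inv_of_mul_eq_one_left (by linear_combination h3)

lemma closure_helper {n : ℕ} (A : Fin n → SL2) (g : ℕ → SL2)
    (L : Fin n → M2)
    (h : Tendsto (fun k => fun i => (↑(g k * A i * (g k)⁻¹) : M2)) atTop (𝓝 L)) :
    L ∈ closure {B : Fin n → M2 |
      ∃ P : SL2, B = fun i => (↑(P * A i * P⁻¹) : M2)} :=
  mem_closure_of_tendsto h (Filter.Eventually.of_forall fun k => ⟨g k, rfl⟩)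

lemma tendsto_upper {x : ℕ → ℂ} (hx : Tendsto x atTop (𝓝 0)) (c1 c2 : ℂ) :
    Tendsto (fun k => !![c1, x k; 0, c2]) atTop (𝓝 !![c1, 0; 0, c2]) := by
  refine tendsto_pi_nhds.2 ?_
  intro i
  rw [tendsto_pi_nhds]
  intro j
  fin_cases i <;> fin_cases j <;> simp <;>
    first
      | exact hx
      | exact tendsto_const_nhds

lemma tendsto_lower {x : ℕ → ℂ} (hx : Tendsto x atTop (𝓝 0)) (c1 c2 : ℂ) :
    Tendsto (fun k => !![c1, 0; x k, c2]) atTop (𝓝 !![c1, 0; 0, c2]) := by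
  refine tendsto_pi_nhds.2 ?_
  intro i
  rw [tendsto_pi_nhds]
  intro j
  fin_cases i <;> fin_cases j <;> simp <;>
    first
      | exact hx
      | exact tendsto_const_nhds

lemma closureA {n : ℕ} (A : Fin n → SL2) (Q : SL2) (l : Fin n → ℂˣ) (a : Fin n → ℂ)
    (hQ : ∀ i, Q * A i * Q⁻¹ = triSL (l i) (a i)) :
    (fun i => (↑(diagSL (l i)) : M2)) ∈ closure {B : Fin n → M2 |
      ∃ P : SL2, B = fun i => (↑(P * A i * P⁻¹) : M2)} := by
  set t : ℕ → ℂˣ := fun k =>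
    (Units.mk0 ((k : ℂ) + 1) (by simpa using Nat.cast_add_one_ne_zero (R := ℂ) k))⁻¹ with ht
  apply closure_helper A (fun k => diagSL (t k) * Q)
  rw [tendsto_pi_nhds]
  intro i
  have hform : ∀ k : ℕ, (↑((diagSL (t k) * Q) * A i * ((diagSL (t k) * Q))⁻¹) : M2)
      = !![(l i : ℂ), ((t k : ℂ)) ^ 2 * a i; 0, ((l i : ℂ))⁻¹] := by
    intro k
    have hgrp : (diagSL (t k) * Q) * A i * ((diagSL (t k) * Q))⁻¹
        = diagSL (t k) * (Q * A i * Q⁻¹) * (diagSL (t k))⁻¹ := by group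
    rw [hgrp, hQ i, conjA, triSL_coe]
  simp only [hform]
  have hlim : (↑(diagSL (l i)) : M2) = !![(l i : ℂ), 0; 0, ((l i : ℂ))⁻¹] := by
    simp [diagSL]
  rw [hlim]
  apply tendsto_upper
  have h2 : Tendsto (fun k : ℕ => ((k : ℂ) + 1)⁻¹ * ((k : ℂ) + 1)⁻¹) atTop (𝓝 0) := by
    simpa using tendsto_inv_nat.mul tendsto_inv_nat
  have h3 := h2.mul_const (a i)
  rw [zero_mul] at h3
  have h4 : ∀ k : ℕ, ((t k : ℂ)) ^ 2 * a i = ((k : ℂ) + 1)⁻¹ * ((k : ℂ) + 1)⁻¹ * a i := by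
    intro k
    have : (t k : ℂ) = ((k : ℂ) + 1)⁻¹ := by simp [ht]
    rw [this]; ring
  simpa only [h4] using h3

lemma closureB {n : ℕ} (A : Fin n → SL2) (Q : SL2) (l : Fin n → ℂˣ) (a : Fin n → ℂ)
    (hQ : ∀ i, Q * A i * Q⁻¹ = triSL (l i) (a i)) :
    (fun i => (↑(diagSL ((l i)⁻¹)) : M2)) ∈ closure {B : Fin n → M2 |
      ∃ P : SL2, B = fun i => (↑(P * A i * P⁻¹) : M2)} := by
  set s : ℕ → ℂˣ := fun k =>
    Units.mk0 ((k : ℂ) + 1) (by simpa using Nat.cast_add_one_ne_zero (R := ℂ) k) with hs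
  apply closure_helper A (fun k => diagSL (s k) * (wSL * Q))
  rw [tendsto_pi_nhds]
  intro i
  have hform : ∀ k : ℕ,
      (↑((diagSL (s k) * (wSL * Q)) * A i * ((diagSL (s k) * (wSL * Q)))⁻¹) : M2)
      = !![((l i : ℂ))⁻¹, 0; -((((s k) : ℂ))⁻¹ ^ 2 * a i), (l i : ℂ)] := by
    intro k
    have hgrp : (diagSL (s k) * (wSL * Q)) * A i * ((diagSL (s k) * (wSL * Q)))⁻¹
        = diagSL (s k) * (wSL * (Q * A i * Q⁻¹) * wSL⁻¹) * (diagSL (s k))⁻¹ := by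
      group
    rw [hgrp, hQ i, conjB]
  simp only [hform]
  have hlim : (↑(diagSL ((l i)⁻¹)) : M2) = !![((l i : ℂ))⁻¹, 0; 0, (l i : ℂ)] := by
    simp [diagSL]
  rw [hlim]
  apply tendsto_lower
  have h2 : Tendsto (fun k : ℕ => ((k : ℂ) + 1)⁻¹ * ((k : ℂ) + 1)⁻¹) atTop (𝓝 0) := by
    simpa using tendsto_inv_nat.mul tendsto_inv_nat
  have h3 := (h2.mul_const (a i)).neg
  rw [zero_mul, neg_zero] at h3
  have h4 : ∀ k : ℕ, -((((s k) : ℂ))⁻¹ ^ 2 * a i)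
      = -(((k : ℂ) + 1)⁻¹ * ((k : ℂ) + 1)⁻¹ * a i) := by
    intro k
    have : ((s k : ℂ))⁻¹ = ((k : ℂ) + 1)⁻¹ := by simp [hs]
    rw [this]; ring
  simpa only [h4] using h3


/-- Proposition 7.6 of the paper: let `W ⊆ SL₂(ℂ)ⁿ` be a set of tuples of diagonal
matrices cut out by polynomial equations on the eigenvalues. If a tuple `A` lies in the
closure (in the analytic topology induced from the space of `n`-tuples of `2 × 2`
complex matrices) of the saturation `SL₂(ℂ)·W` of `W` under simultaneous conjugation,
then the closure of the conjugation orbit of `A` meets `W`. -/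
theorem orbitClosure_meets_diagonal_core {n r : ℕ}
    (f : Fin r → MvPolynomial (Fin n) ℂ)
    (W : Set (Fin n → Matrix (Fin 2) (Fin 2) ℂ))
    (hW : W = {B | ∃ lam : Fin n → ℂˣ,
      (∀ j, MvPolynomial.eval (fun i => (lam i : ℂ)) (f j) = 0) ∧
      B = fun i => (diagSL (lam i) : Matrix (Fin 2) (Fin 2) ℂ)})
    (A : Fin n → Matrix.SpecialLinearGroup (Fin 2) ℂ)
    (hA : (fun i => (A i : Matrix (Fin 2) (Fin 2) ℂ)) ∈
      closure {B : Fin n → Matrix (Fin 2) (Fin 2) ℂ |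
        ∃ P : Matrix.SpecialLinearGroup (Fin 2) ℂ, ∃ C ∈ W,
          B = fun i => (P : Matrix (Fin 2) (Fin 2) ℂ) * C i *
            ((P⁻¹ : Matrix.SpecialLinearGroup (Fin 2) ℂ) : Matrix (Fin 2) (Fin 2) ℂ)}) :
    (closure {B : Fin n → Matrix (Fin 2) (Fin 2) ℂ |
        ∃ P : Matrix.SpecialLinearGroup (Fin 2) ℂ,
          B = fun i =>
            ((P * A i * P⁻¹ : Matrix.SpecialLinearGroup (Fin 2) ℂ) :
              Matrix (Fin 2) (Fin 2) ℂ)} ∩ W).Nonempty := by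
  haveI : FirstCountableTopology (Matrix (Fin 2) (Fin 2) ℂ) :=
    inferInstanceAs (FirstCountableTopology (Fin 2 → Fin 2 → ℂ))
  obtain ⟨u, hu_mem, hu_tend⟩ := mem_closure_iff_seq_limit.1 hA
  choose P CC hCC hu_eq using hu_mem
  rw [hW] at hCC
  choose μ hf hCeq using hCC
  have hu' : ∀ k i, u k i = (↑(P k * diagSL (μ k i) * (P k)⁻¹) : M2) := by
    intro k i
    have h1 := congrFun (hu_eq k) i
    simp only [hCeq k] at h1
    rw [h1, Matrix.SpecialLinearGroup.coe_mul, Matrix.SpecialLinearGroup.coe_mul]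
  have htend : ∀ i, Tendsto (fun k => u k i) atTop (𝓝 (↑(A i) : M2)) := fun i =>
    (tendsto_pi_nhds.1 hu_tend) i
  have hAcomm : ∀ i j, (↑(A i) : M2) * (↑(A j) : M2) = (↑(A j) : M2) * (↑(A i) : M2) := by
    intro i j
    have hmul1 := (htend i).mul (htend j)
    have hmul2 := (htend j).mul (htend i)
    have heq : ∀ k, u k i * u k j = u k j * u k i := by
      intro k
      rw [hu' k i, hu' k j, ← Matrix.SpecialLinearGroup.coe_mul,
        ← Matrix.SpecialLinearGroup.coe_mul]
      congr 1
      have hcc : ∀ (D E : SL2),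
          (P k * D * (P k)⁻¹) * (P k * E * (P k)⁻¹) = P k * (D * E) * (P k)⁻¹ := by
        intro D E; group
      rw [hcc, hcc, diagSL_comm]
    exact tendsto_nhds_unique hmul1 (Filter.Tendsto.congr (fun k => (heq k).symm) hmul2)
  obtain ⟨Q, l, a, hQ⟩ := exists_tri A hAcomm
  have htr : Continuous fun X : M2 => X.trace := by
    have e : (fun X : M2 => X.trace) = fun X : M2 => X 0 0 + X 1 1 :=
      funext fun X => Matrix.trace_fin_two X
    rw [e]
    exact (continuous_id.matrix_elem 0 0).add (continuous_id.matrix_elem 1 1)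
  have hsum : ∀ i, Tendsto (fun k => (μ k i : ℂ) + ((μ k i : ℂ))⁻¹) atTop
      (𝓝 ((l i : ℂ) + ((l i : ℂ))⁻¹)) := by
    intro i
    have h1 := (htr.tendsto _).comp (htend i)
    have h2 : ∀ k, (u k i).trace = (μ k i : ℂ) + ((μ k i : ℂ))⁻¹ := by
      intro k
      rw [hu' k i, traceConjSL, diagSL_eq, trace_triSL]
    have h3 : (↑(A i) : M2).trace = (l i : ℂ) + ((l i : ℂ))⁻¹ := by
      rw [← traceConjSL Q (A i), hQ i, trace_triSL]
    rw [h3] at h1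
    exact Filter.Tendsto.congr h2 h1
  have hprod : ∀ i j, Tendsto
      (fun k => (μ k i : ℂ) * (μ k j : ℂ) + ((μ k i : ℂ) * (μ k j : ℂ))⁻¹) atTop
      (𝓝 ((l i : ℂ) * (l j : ℂ) + ((l i : ℂ) * (l j : ℂ))⁻¹)) := by
    intro i j
    have h1 := (htr.tendsto _).comp ((htend i).mul (htend j))
    have h2 : ∀ k, (u k i * u k j).trace
        = (μ k i : ℂ) * (μ k j : ℂ) + ((μ k i : ℂ) * (μ k j : ℂ))⁻¹ := by
      intro k
      rw [hu' k i, hu' k j, ← Matrix.SpecialLinearGroup.coe_mul,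
        show (P k * diagSL (μ k i) * (P k)⁻¹) * (P k * diagSL (μ k j) * (P k)⁻¹)
          = P k * (diagSL (μ k i) * diagSL (μ k j)) * (P k)⁻¹ from by group,
        traceConjSL, Matrix.SpecialLinearGroup.coe_mul, trace_diagSL_mul]
    have h3 : ((↑(A i) : M2) * (↑(A j) : M2)).trace
        = (l i : ℂ) * (l j : ℂ) + ((l i : ℂ) * (l j : ℂ))⁻¹ := by
      rw [← Matrix.SpecialLinearGroup.coe_mul, ← traceConjSL Q (A i * A j),
        show Q * (A i * A j) * Q⁻¹ = (Q * A i * Q⁻¹) * (Q * A j * Q⁻¹) from by group,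
        Matrix.SpecialLinearGroup.coe_mul, hQ i, hQ j, trace_triSL_mul]
    rw [h3] at h1
    exact Filter.Tendsto.congr h2 h1
  have hbound : ∀ i, ∃ C : ℝ, ∀ k, ‖(μ k i : ℂ)‖ ≤ C := by
    intro i
    obtain ⟨C, hC⟩ := (hsum i).norm.bddAbove_range
    refine ⟨max 1 (C + 1), fun k => ?_⟩
    exact norm_le_of_add_inv (Units.ne_zero _) (hC ⟨k, rfl⟩)
  choose C hC using hbound
  have hcpt : IsCompact (Set.univ.pi fun i : Fin n => Metric.closedBall (0 : ℂ) (C i)) :=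
    isCompact_univ_pi fun i => isCompact_closedBall _ _
  have hmem : ∀ k, (fun i => (μ k i : ℂ)) ∈
      Set.univ.pi fun i : Fin n => Metric.closedBall (0 : ℂ) (C i) := by
    intro k i _
    simpa [Metric.mem_closedBall, dist_zero_right] using hC i k
  obtain ⟨ν, hνmem, φ, hφ, hνtend⟩ := hcpt.tendsto_subseq hmem
  have hν : ∀ i, Tendsto (fun k => (μ (φ k) i : ℂ)) atTop (𝓝 (ν i)) := fun i =>
    (tendsto_pi_nhds.1 hνtend) i
  have hφat : Tendsto φ atTop atTop := hφ.tendsto_atTop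
  have hinv : ∀ i, Tendsto (fun k => ((μ (φ k) i : ℂ))⁻¹) atTop
      (𝓝 ((l i : ℂ) + ((l i : ℂ))⁻¹ - ν i)) := by
    intro i
    have h1 := ((hsum i).comp hφat).sub (hν i)
    exact Filter.Tendsto.congr (fun k => by simp only [Function.comp_apply]; ring) h1
  have hν1 : ∀ i, ν i * ((l i : ℂ) + ((l i : ℂ))⁻¹ - ν i) = 1 := by
    intro i
    have h1 := (hν i).mul (hinv i)
    have h2 : ∀ k, (μ (φ k) i : ℂ) * ((μ (φ k) i : ℂ))⁻¹ = 1 := fun k =>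
      mul_inv_cancel₀ (Units.ne_zero _)
    have hone : Tendsto (fun k => (μ (φ k) i : ℂ) * ((μ (φ k) i : ℂ))⁻¹) atTop (𝓝 1) := by
      simp only [h2]
      exact tendsto_const_nhds
    exact tendsto_nhds_unique h1 hone
  have hν0 : ∀ i, ν i ≠ 0 := fun i h => by simpa [h] using hν1 i
  have hνinv : ∀ i, (ν i)⁻¹ = (l i : ℂ) + ((l i : ℂ))⁻¹ - ν i := fun i =>
    (eq_inv_of_mul_eq_one_right (hν1 i)).symm
  have hsum_lim : ∀ i, ν i + (ν i)⁻¹ = (l i : ℂ) + ((l i : ℂ))⁻¹ := by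
    intro i; rw [hνinv i]; ring
  have hprod_lim : ∀ i j, ν i * ν j + (ν i * ν j)⁻¹
      = (l i : ℂ) * (l j : ℂ) + ((l i : ℂ) * (l j : ℂ))⁻¹ := by
    intro i j
    have h1 := (hprod i j).comp hφat
    have hmm := ((hν i).mul (hν j)).add ((hinv i).mul (hinv j))
    rw [← hνinv i, ← hνinv j] at hmm
    have h2 := Filter.Tendsto.congr
      (fun k => by rw [mul_inv] : ∀ k, (μ (φ k) i : ℂ) * (μ (φ k) j : ℂ)
        + ((μ (φ k) i : ℂ))⁻¹ * ((μ (φ k) j : ℂ))⁻¹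
        = (μ (φ k) i : ℂ) * (μ (φ k) j : ℂ)
        + ((μ (φ k) i : ℂ) * (μ (φ k) j : ℂ))⁻¹) hmm
    have := tendsto_nhds_unique h2 h1
    rw [← this, mul_inv]
  have hfν : ∀ j, MvPolynomial.eval ν (f j) = 0 := by
    intro j
    have hcont := ((MvPolynomial.continuous_eval (f j)).tendsto ν).comp hνtend
    have h2 : ∀ k, MvPolynomial.eval (fun i => (μ (φ k) i : ℂ)) (f j) = 0 := fun k =>
      hf (φ k) j
    have h0 : Tendsto (fun k => MvPolynomial.eval (fun i => (μ (φ k) i : ℂ)) (f j))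
        atTop (𝓝 0) := by
      simp only [h2]
      exact tendsto_const_nhds
    exact tendsto_nhds_unique hcont h0
  have hdi : ∀ i, ν i = (l i : ℂ) ∨ ν i = ((l i : ℂ))⁻¹ := fun i =>
    eq_or_eq_inv (hν0 i) (Units.ne_zero _) (hsum_lim i)
  have hglob : (∀ i, ν i = (l i : ℂ)) ∨ (∀ i, ν i = ((l i : ℂ))⁻¹) := by
    by_cases hall : ∀ i, (l i : ℂ) = ((l i : ℂ))⁻¹
    · left
      intro i
      rcases hdi i with h | h
      · exact h
      · rw [h, ← hall i]
    · push_neg at hall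
      obtain ⟨i₀, hi₀⟩ := hall
      rcases hdi i₀ with h0 | h0
      · left
        intro j
        by_cases hj : (l j : ℂ) = ((l j : ℂ))⁻¹
        · rcases hdi j with h | h
          · exact h
          · rw [h, ← hj]
        · rcases hdi j with h | h
          · exact h
          · exfalso
            have hp := hprod_lim i₀ j
            rw [h0, h] at hp
            rcases eq_or_eq_inv
                (mul_ne_zero (Units.ne_zero _) (inv_ne_zero (Units.ne_zero _)))
                (mul_ne_zero (Units.ne_zero _) (Units.ne_zero _)) hp with hq | hq
            · exact hj (mul_left_cancel₀ (Units.ne_zero _) hq).symm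
            · rw [mul_inv] at hq
              exact hi₀ (mul_right_cancel₀ (inv_ne_zero (Units.ne_zero _)) hq)
      · right
        intro j
        by_cases hj : (l j : ℂ) = ((l j : ℂ))⁻¹
        · rcases hdi j with h | h
          · rw [h]; exact hj
          · exact h
        · rcases hdi j with h | h
          · exfalso
            have hp := hprod_lim i₀ j
            rw [h0, h] at hp
            rcases eq_or_eq_inv
                (mul_ne_zero (inv_ne_zero (Units.ne_zero _)) (Units.ne_zero _))
                (mul_ne_zero (Units.ne_zero _) (Units.ne_zero _)) hp with hq | hq
            · exact hi₀ (mul_right_cancel₀ (Units.ne_zero _) hq).symm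
            · rw [mul_inv] at hq
              exact hj (mul_left_cancel₀ (inv_ne_zero (Units.ne_zero _)) hq)
          · exact h
  rcases hglob with hcase | hcase
  · refine ⟨fun i => (↑(diagSL (l i)) : M2), closureA A Q l a hQ, ?_⟩
    rw [hW]
    refine ⟨l, fun j => ?_, rfl⟩
    have e : (fun i => (l i : ℂ)) = ν := funext fun i => (hcase i).symm
    rw [e]
    exact hfν j
  · refine ⟨fun i => (↑(diagSL ((l i)⁻¹)) : M2), closureB A Q l a hQ, ?_⟩
    rw [hW]
    refine ⟨fun i => (l i)⁻¹, fun j => ?_, rfl⟩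
    have e : (fun i => (((l i)⁻¹ : ℂˣ) : ℂ)) = ν := funext fun i => by
      rw [hcase i]; simp
    rw [e]
    exact hfν j
end

section
/- For i = 1, …, n let Wᵢ ⊆ SL₂(ℂ)ⁿ (i = 1, 2) be sets of tuples of diagonal matrices of the form Wᵢ = {(D_{λ₁}, …, D_{λₙ}) : λ ∈ (ℂ*)ⁿ, f(λ) = 0 for all f ∈ Fᵢ}, where F₁, F₂ are finite sets of polynomials in n variables over ℂ. Suppose each Wᵢ is invariant under the involution (D_{λ₁}, …, D_{λₙ}) ↦ (D_{λ₁⁻¹}, …, D_{λₙ⁻¹}) and that W₁ ∩ W₂ = ∅. Then the closures, in the analytic topology on SL₂(ℂ)ⁿ, of the sets {(PB₁P⁻¹, …, PBₙP⁻¹) : P ∈ SL₂(ℂ), (B₁, …, Bₙ) ∈ W₁} and {(PB₁P⁻¹, …, PBₙP⁻¹) : P ∈ SL₂(ℂ), (B₁, …, Bₙ) ∈ W₂} are disjoint. -/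
open Filter Topology

lemma quad_cases (a c : ℂˣ) (h : (a : ℂ) + ((a : ℂ))⁻¹ = (c : ℂ) + ((c : ℂ))⁻¹) :
    c = a ∨ c = a⁻¹ := by
  have ha : (a : ℂ) ≠ 0 := a.ne_zero
  have hc : (c : ℂ) ≠ 0 := c.ne_zero
  have h0 : ((c : ℂ) - a) * ((c : ℂ) - (a : ℂ)⁻¹) = 0 := by
    linear_combination (-(c : ℂ)) * h + mul_inv_cancel₀ ha - mul_inv_cancel₀ hc
  rcases mul_eq_zero.mp h0 with h1 | h1
  · left; ext; exact sub_eq_zero.mp h1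
  · right; ext; rw [Units.val_inv_eq_inv_val]; exact sub_eq_zero.mp h1

lemma norm_le_of_trace_bound (u : ℂ) (hu : u ≠ 0) (M : ℝ) (hM : 0 ≤ M)
    (h : ‖u + u⁻¹‖ ≤ M) : ‖u‖ ≤ M + 1 := by
  have key : u * u = (u + u⁻¹) * u - 1 := by field_simp; ring
  have h2 : ‖u‖ ^ 2 ≤ M * ‖u‖ + 1 := by
    have : ‖u * u‖ ≤ ‖(u + u⁻¹) * u‖ + 1 := by
      rw [key]; exact (norm_sub_le _ _).trans (by simp)
    rw [norm_mul, norm_mul] at this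
    nlinarith [norm_nonneg u, mul_le_mul_of_nonneg_right h (norm_nonneg u)]
  nlinarith [norm_nonneg u]

lemma consistency {n : ℕ} (lam mu : Fin n → ℂˣ)
    (h1 : ∀ i, ((lam i : ℂ)) + ((lam i : ℂ))⁻¹ = ((mu i : ℂ)) + ((mu i : ℂ))⁻¹)
    (h2 : ∀ i j, ((lam i : ℂ) * lam j) + ((lam i : ℂ) * lam j)⁻¹
        = ((mu i : ℂ) * mu j) + ((mu i : ℂ) * mu j)⁻¹) :
    (∀ i, mu i = lam i) ∨ (∀ i, mu i = (lam i)⁻¹) := by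
  by_cases hall : ∀ i, mu i = (lam i)⁻¹
  · exact Or.inr hall
  push_neg at hall
  obtain ⟨i₀, hi₀⟩ := hall
  have hA : mu i₀ = lam i₀ := by
    rcases quad_cases (lam i₀) (mu i₀) (h1 i₀) with h | h
    · exact h
    · exact absurd h hi₀
  have hfix : lam i₀ ≠ (lam i₀)⁻¹ := fun h => hi₀ (hA.trans h)
  left
  intro j
  rcases quad_cases (lam j) (mu j) (h1 j) with h | h
  · exact h
  -- mu j = (lam j)⁻¹; use the product relation
  have hprod := quad_cases (lam i₀ * lam j) (mu i₀ * mu j)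
    (by push_cast; exact h2 i₀ j)
  rcases hprod with hp | hp
  · -- lam i₀ * mu j = lam i₀ * lam j ⟹ mu j = lam j
    rw [hA] at hp
    exact mul_left_cancel hp
  · -- lam i₀ * (lam j)⁻¹ = (lam i₀)⁻¹ * (lam j)⁻¹ ⟹ lam i₀ = (lam i₀)⁻¹
    rw [hA, h, mul_inv] at hp
    exact absurd (mul_right_cancel hp) hfix

lemma diagSL_coe_mul (a b : ℂˣ) :
    (diagSL a : Matrix (Fin 2) (Fin 2) ℂ) * diagSL b
      = (diagSL (a * b) : Matrix (Fin 2) (Fin 2) ℂ) := by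
  simp [diagSL, Matrix.mul_fin_two, mul_inv, mul_comm]

lemma trace_diagSL (a : ℂˣ) :
    Matrix.trace (diagSL a : Matrix (Fin 2) (Fin 2) ℂ) = (a : ℂ) + ((a : ℂ))⁻¹ := by
  simp [diagSL, Matrix.trace_fin_two]

lemma trace_conj (P : Matrix.SpecialLinearGroup (Fin 2) ℂ) (C : Matrix (Fin 2) (Fin 2) ℂ) :
    Matrix.trace ((P : Matrix (Fin 2) (Fin 2) ℂ) * C *
      ((P⁻¹ : Matrix.SpecialLinearGroup (Fin 2) ℂ) : Matrix (Fin 2) (Fin 2) ℂ)) =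
    Matrix.trace C := by
  rw [Matrix.trace_mul_cycle]
  have : ((P⁻¹ : Matrix.SpecialLinearGroup (Fin 2) ℂ) : Matrix (Fin 2) (Fin 2) ℂ) *
      (P : Matrix (Fin 2) (Fin 2) ℂ) = 1 := by
    rw [← Matrix.SpecialLinearGroup.coe_mul, inv_mul_cancel,
      Matrix.SpecialLinearGroup.coe_one]
  rw [this, Matrix.one_mul]

lemma conj_mul_conj (P : Matrix.SpecialLinearGroup (Fin 2) ℂ)
    (C D : Matrix (Fin 2) (Fin 2) ℂ) :
    ((P : Matrix (Fin 2) (Fin 2) ℂ) * C *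
        ((P⁻¹ : Matrix.SpecialLinearGroup (Fin 2) ℂ) : Matrix (Fin 2) (Fin 2) ℂ)) *
      ((P : Matrix (Fin 2) (Fin 2) ℂ) * D *
        ((P⁻¹ : Matrix.SpecialLinearGroup (Fin 2) ℂ) : Matrix (Fin 2) (Fin 2) ℂ)) =
    (P : Matrix (Fin 2) (Fin 2) ℂ) * (C * D) *
        ((P⁻¹ : Matrix.SpecialLinearGroup (Fin 2) ℂ) : Matrix (Fin 2) (Fin 2) ℂ) := by
  have h1 : ((P⁻¹ : Matrix.SpecialLinearGroup (Fin 2) ℂ) : Matrix (Fin 2) (Fin 2) ℂ) *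
      (P : Matrix (Fin 2) (Fin 2) ℂ) = 1 := by
    rw [← Matrix.SpecialLinearGroup.coe_mul, inv_mul_cancel,
      Matrix.SpecialLinearGroup.coe_one]
  calc ((P : Matrix (Fin 2) (Fin 2) ℂ) * C *
        ((P⁻¹ : Matrix.SpecialLinearGroup (Fin 2) ℂ) : Matrix (Fin 2) (Fin 2) ℂ)) *
      ((P : Matrix (Fin 2) (Fin 2) ℂ) * D *
        ((P⁻¹ : Matrix.SpecialLinearGroup (Fin 2) ℂ) : Matrix (Fin 2) (Fin 2) ℂ))
      = (P : Matrix (Fin 2) (Fin 2) ℂ) * C *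
        ((((P⁻¹ : Matrix.SpecialLinearGroup (Fin 2) ℂ) : Matrix (Fin 2) (Fin 2) ℂ) *
          (P : Matrix (Fin 2) (Fin 2) ℂ)) * D) *
        ((P⁻¹ : Matrix.SpecialLinearGroup (Fin 2) ℂ) : Matrix (Fin 2) (Fin 2) ℂ) := by
        simp only [Matrix.mul_assoc]
    _ = _ := by rw [h1, Matrix.one_mul]; simp only [Matrix.mul_assoc]

lemma extract {n : ℕ} (F : Finset (MvPolynomial (Fin n) ℂ))
    (x : ℕ → (Fin n → Matrix (Fin 2) (Fin 2) ℂ))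
    (B : Fin n → Matrix (Fin 2) (Fin 2) ℂ)
    (hlim : Tendsto x atTop (𝓝 B))
    (hmem : ∀ k, ∃ P : Matrix.SpecialLinearGroup (Fin 2) ℂ, ∃ lam : Fin n → ℂˣ,
      (∀ f ∈ F, MvPolynomial.eval (fun i => (lam i : ℂ)) f = 0) ∧
      x k = fun i => (P : Matrix (Fin 2) (Fin 2) ℂ) * (diagSL (lam i) : Matrix (Fin 2) (Fin 2) ℂ) *
        ((P⁻¹ : Matrix.SpecialLinearGroup (Fin 2) ℂ) : Matrix (Fin 2) (Fin 2) ℂ)) :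
    ∃ lam : Fin n → ℂˣ,
      (∀ f ∈ F, MvPolynomial.eval (fun i => (lam i : ℂ)) f = 0) ∧
      (∀ i, ((lam i : ℂ)) + ((lam i : ℂ))⁻¹ = Matrix.trace (B i)) ∧
      (∀ i j, ((lam i : ℂ) * lam j) + ((lam i : ℂ) * lam j)⁻¹
        = Matrix.trace (B i * B j)) := by
  choose P lam heval hx using hmem
  have htr : ∀ k i, Matrix.trace (x k i) = (lam k i : ℂ) + ((lam k i : ℂ))⁻¹ := by
    intro k i
    rw [hx k]
    simp only
    rw [trace_conj, trace_diagSL]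
  have htr2 : ∀ k i j, Matrix.trace (x k i * x k j)
      = ((lam k i : ℂ) * lam k j) + (((lam k i : ℂ)) * lam k j)⁻¹ := by
    intro k i j
    rw [hx k]
    simp only
    rw [conj_mul_conj, diagSL_coe_mul, trace_conj, trace_diagSL]
    push_cast
    ring
  have hcont_i : ∀ i : Fin n, Tendsto (fun k => Matrix.trace (x k i)) atTop
      (𝓝 (Matrix.trace (B i))) := by
    intro i
    have hc : Continuous (fun B : Fin n → Matrix (Fin 2) (Fin 2) ℂ => Matrix.trace (B i)) :=
      (continuous_apply i).matrix_trace
    exact (hc.tendsto B).comp hlim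
  have hcont_ij : ∀ i j : Fin n, Tendsto (fun k => Matrix.trace (x k i * x k j)) atTop
      (𝓝 (Matrix.trace (B i * B j))) := by
    intro i j
    have hc : Continuous (fun B : Fin n → Matrix (Fin 2) (Fin 2) ℂ => Matrix.trace (B i * B j)) :=
      ((continuous_apply i).matrix_mul (continuous_apply j)).matrix_trace
    exact (hc.tendsto B).comp hlim
  -- bounds
  have hbd : ∀ i : Fin n, ∃ M : ℝ, 0 ≤ M ∧
      ∀ k, ‖(lam k i : ℂ)‖ ≤ M + 1 ∧ ‖((lam k i : ℂ))⁻¹‖ ≤ M + 1 := by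
    intro i
    obtain ⟨M0, hM0⟩ := ((hcont_i i).norm).bddAbove_range
    refine ⟨max M0 0, le_max_right _ _, fun k => ?_⟩
    have hb : ‖(lam k i : ℂ) + ((lam k i : ℂ))⁻¹‖ ≤ max M0 0 := by
      have : ‖Matrix.trace (x k i)‖ ≤ M0 := hM0 ⟨k, rfl⟩
      rw [htr k i] at this
      exact this.trans (le_max_left _ _)
    constructor
    · exact norm_le_of_trace_bound _ (lam k i).ne_zero _ (le_max_right _ _) hb
    · refine norm_le_of_trace_bound _ (inv_ne_zero (lam k i).ne_zero) _ (le_max_right _ _) ?_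
      rwa [inv_inv, add_comm]
  choose M hM0 hMb using hbd
  set R : ℝ := 1 + ∑ i, M i with hR
  have hRnn : 0 ≤ R := add_nonneg zero_le_one (Finset.sum_nonneg fun i _ => hM0 i)
  have hMR : ∀ i, M i + 1 ≤ R := by
    intro i
    have : M i ≤ ∑ j, M j :=
      Finset.single_le_sum (fun j _ => hM0 j) (Finset.mem_univ i)
    rw [hR]; linarith
  set w : ℕ → (Fin n → ℂ × ℂ) := fun k i => ((lam k i : ℂ), ((lam k i : ℂ))⁻¹) with hw
  have hwball : ∀ k, w k ∈ Metric.closedBall (0 : Fin n → ℂ × ℂ) R := by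
    intro k
    rw [Metric.mem_closedBall, dist_zero_right, pi_norm_le_iff_of_nonneg hRnn]
    intro i
    rw [Prod.norm_def]
    exact max_le ((hMb i k).1.trans (hMR i)) ((hMb i k).2.trans (hMR i))
  obtain ⟨a, -, φ, hφ, hwa⟩ :=
    tendsto_subseq_of_bounded Metric.isBounded_closedBall hwball
  have h1 : ∀ i : Fin n, Tendsto (fun k => (lam (φ k) i : ℂ)) atTop (𝓝 (a i).1) := by
    intro i
    have hc : Continuous (fun v : Fin n → ℂ × ℂ => (v i).1) :=
      continuous_fst.comp (continuous_apply i)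
    exact (hc.tendsto a).comp hwa
  have h2 : ∀ i : Fin n, Tendsto (fun k => ((lam (φ k) i : ℂ))⁻¹) atTop (𝓝 (a i).2) := by
    intro i
    have hc : Continuous (fun v : Fin n → ℂ × ℂ => (v i).2) :=
      continuous_snd.comp (continuous_apply i)
    exact (hc.tendsto a).comp hwa
  have hmul1 : ∀ i, (a i).1 * (a i).2 = 1 := by
    intro i
    have hcseq : (fun k => (lam (φ k) i : ℂ) * ((lam (φ k) i : ℂ))⁻¹) = fun _ => (1 : ℂ) :=
      funext fun k => mul_inv_cancel₀ (lam (φ k) i).ne_zero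
    have := (h1 i).mul (h2 i)
    rw [hcseq] at this
    exact (tendsto_nhds_unique this tendsto_const_nhds)
  have hinv : ∀ i, ((a i).1)⁻¹ = (a i).2 := fun i => inv_eq_of_mul_eq_one_right (hmul1 i)
  have hne : ∀ i, (a i).1 ≠ 0 := fun i => left_ne_zero_of_mul_eq_one (hmul1 i)
  refine ⟨fun i => Units.mk0 ((a i).1) (hne i), ?_, ?_, ?_⟩
  · intro f hf
    have hvec : Tendsto (fun k => (fun i => (lam (φ k) i : ℂ))) atTop
        (𝓝 (fun i => (a i).1)) := tendsto_pi_nhds.mpr h1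
    have hev := ((MvPolynomial.continuous_eval f).tendsto _).comp hvec
    have hzero : (fun k => MvPolynomial.eval (fun i => (lam (φ k) i : ℂ)) f)
        = fun _ => (0 : ℂ) := funext fun k => heval (φ k) f hf
    rw [show ((fun x => MvPolynomial.eval x f) ∘ fun k => (fun i => (lam (φ k) i : ℂ)))
        = fun k => MvPolynomial.eval (fun i => (lam (φ k) i : ℂ)) f from rfl, hzero] at hev
    exact (tendsto_nhds_unique hev tendsto_const_nhds)
  · intro i
    have hsub : Tendsto (fun k => Matrix.trace (x (φ k) i)) atTop
        (𝓝 (Matrix.trace (B i))) := (hcont_i i).comp hφ.tendsto_atTop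
    have hseq : (fun k => Matrix.trace (x (φ k) i))
        = fun k => (lam (φ k) i : ℂ) + ((lam (φ k) i : ℂ))⁻¹ := funext fun k => htr (φ k) i
    rw [hseq] at hsub
    have := (h1 i).add (h2 i)
    simp only [Units.val_mk0]
    rw [hinv i]
    exact tendsto_nhds_unique this hsub
  · intro i j
    have hsub : Tendsto (fun k => Matrix.trace (x (φ k) i * x (φ k) j)) atTop
        (𝓝 (Matrix.trace (B i * B j))) := (hcont_ij i j).comp hφ.tendsto_atTop
    have hseq : (fun k => Matrix.trace (x (φ k) i * x (φ k) j))
        = fun k => ((lam (φ k) i : ℂ) * lam (φ k) j)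
          + (((lam (φ k) i : ℂ)) * lam (φ k) j)⁻¹ := funext fun k => htr2 (φ k) i j
    rw [hseq] at hsub
    have hlimseq : Tendsto (fun k => ((lam (φ k) i : ℂ) * lam (φ k) j)
        + (((lam (φ k) i : ℂ)) * lam (φ k) j)⁻¹) atTop
        (𝓝 ((a i).1 * (a j).1 + (a i).2 * (a j).2)) := by
      have heqf : (fun k => ((lam (φ k) i : ℂ) * lam (φ k) j)
          + (((lam (φ k) i : ℂ)) * lam (φ k) j)⁻¹)
          = fun k => ((lam (φ k) i : ℂ) * lam (φ k) j)
          + ((lam (φ k) i : ℂ))⁻¹ * ((lam (φ k) j : ℂ))⁻¹ := by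
        funext k; rw [mul_inv]
      rw [heqf]
      exact ((h1 i).mul (h1 j)).add ((h2 i).mul (h2 j))
    simp only [Units.val_mk0]
    rw [mul_inv, hinv i, hinv j]
    exact tendsto_nhds_unique hlimseq hsub

/-- The separation property of the diagonal core: if `W₁, W₂ ⊆ SL₂(ℂ)ⁿ` are disjoint sets
of tuples of diagonal matrices cut out by finite sets of polynomial equations on the
eigenvalues, each invariant under the involution `(D_{λ₁}, …, D_{λₙ}) ↦ (D_{λ₁⁻¹}, …,
D_{λₙ⁻¹})`, then the closures (in the analytic topology induced from the space of
`n`-tuples of `2 × 2` complex matrices) of their saturations under simultaneous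
conjugation by `SL₂(ℂ)` are disjoint. -/
theorem saturations_of_disjoint_diagonal_sets_disjoint {n : ℕ}
    (F₁ F₂ : Finset (MvPolynomial (Fin n) ℂ))
    (W₁ W₂ : Set (Fin n → Matrix (Fin 2) (Fin 2) ℂ))
    (hW₁ : W₁ = {B | ∃ lam : Fin n → ℂˣ,
      (∀ f ∈ F₁, MvPolynomial.eval (fun i => (lam i : ℂ)) f = 0) ∧
      B = fun i => (diagSL (lam i) : Matrix (Fin 2) (Fin 2) ℂ)})
    (hW₂ : W₂ = {B | ∃ lam : Fin n → ℂˣ,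
      (∀ f ∈ F₂, MvPolynomial.eval (fun i => (lam i : ℂ)) f = 0) ∧
      B = fun i => (diagSL (lam i) : Matrix (Fin 2) (Fin 2) ℂ)})
    (hinv₁ : ∀ lam : Fin n → ℂˣ,
      (fun i => (diagSL (lam i) : Matrix (Fin 2) (Fin 2) ℂ)) ∈ W₁ →
      (fun i => (diagSL ((lam i)⁻¹) : Matrix (Fin 2) (Fin 2) ℂ)) ∈ W₁)
    (hinv₂ : ∀ lam : Fin n → ℂˣ,
      (fun i => (diagSL (lam i) : Matrix (Fin 2) (Fin 2) ℂ)) ∈ W₂ →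
      (fun i => (diagSL ((lam i)⁻¹) : Matrix (Fin 2) (Fin 2) ℂ)) ∈ W₂)
    (hdisj : Disjoint W₁ W₂) :
    Disjoint
      (closure {B : Fin n → Matrix (Fin 2) (Fin 2) ℂ |
        ∃ P : Matrix.SpecialLinearGroup (Fin 2) ℂ, ∃ C ∈ W₁,
          B = fun i => (P : Matrix (Fin 2) (Fin 2) ℂ) * C i *
            ((P⁻¹ : Matrix.SpecialLinearGroup (Fin 2) ℂ) : Matrix (Fin 2) (Fin 2) ℂ)})
      (closure {B : Fin n → Matrix (Fin 2) (Fin 2) ℂ |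
        ∃ P : Matrix.SpecialLinearGroup (Fin 2) ℂ, ∃ C ∈ W₂,
          B = fun i => (P : Matrix (Fin 2) (Fin 2) ℂ) * C i *
            ((P⁻¹ : Matrix.SpecialLinearGroup (Fin 2) ℂ) : Matrix (Fin 2) (Fin 2) ℂ)}) := by
  haveI : FirstCountableTopology (Matrix (Fin 2) (Fin 2) ℂ) :=
    inferInstanceAs (FirstCountableTopology (Fin 2 → Fin 2 → ℂ))
  rw [Set.disjoint_left]
  intro B hB1 hB2
  rw [mem_closure_iff_seq_limit] at hB1 hB2
  obtain ⟨x, hx, hxl⟩ := hB1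
  obtain ⟨y, hy, hyl⟩ := hB2
  have hx' : ∀ k, ∃ P : Matrix.SpecialLinearGroup (Fin 2) ℂ, ∃ lam : Fin n → ℂˣ,
      (∀ f ∈ F₁, MvPolynomial.eval (fun i => (lam i : ℂ)) f = 0) ∧
      x k = fun i => (P : Matrix (Fin 2) (Fin 2) ℂ) * (diagSL (lam i) : Matrix (Fin 2) (Fin 2) ℂ) *
        ((P⁻¹ : Matrix.SpecialLinearGroup (Fin 2) ℂ) : Matrix (Fin 2) (Fin 2) ℂ) := by
    intro k
    obtain ⟨P, C, hC, hxk⟩ := hx k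
    rw [hW₁] at hC
    obtain ⟨lam, hev, hCeq⟩ := hC
    exact ⟨P, lam, hev, by rw [hxk, hCeq]⟩
  have hy' : ∀ k, ∃ P : Matrix.SpecialLinearGroup (Fin 2) ℂ, ∃ lam : Fin n → ℂˣ,
      (∀ f ∈ F₂, MvPolynomial.eval (fun i => (lam i : ℂ)) f = 0) ∧
      y k = fun i => (P : Matrix (Fin 2) (Fin 2) ℂ) * (diagSL (lam i) : Matrix (Fin 2) (Fin 2) ℂ) *
        ((P⁻¹ : Matrix.SpecialLinearGroup (Fin 2) ℂ) : Matrix (Fin 2) (Fin 2) ℂ) := by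
    intro k
    obtain ⟨P, C, hC, hyk⟩ := hy k
    rw [hW₂] at hC
    obtain ⟨lam, hev, hCeq⟩ := hC
    exact ⟨P, lam, hev, by rw [hyk, hCeq]⟩
  obtain ⟨lam, hev1, ht1, ht2⟩ := extract F₁ x B hxl hx'
  obtain ⟨mu, hev2, hs1, hs2⟩ := extract F₂ y B hyl hy'
  have h1 : ∀ i, ((lam i : ℂ)) + ((lam i : ℂ))⁻¹ = ((mu i : ℂ)) + ((mu i : ℂ))⁻¹ :=
    fun i => (ht1 i).trans (hs1 i).symm
  have h2 : ∀ i j, ((lam i : ℂ) * lam j) + ((lam i : ℂ) * lam j)⁻¹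
      = ((mu i : ℂ) * mu j) + ((mu i : ℂ) * mu j)⁻¹ :=
    fun i j => (ht2 i j).trans (hs2 i j).symm
  have hmem1 : (fun i => (diagSL (lam i) : Matrix (Fin 2) (Fin 2) ℂ)) ∈ W₁ := by
    rw [hW₁]; exact ⟨lam, hev1, rfl⟩
  have hmem2 : (fun i => (diagSL (mu i) : Matrix (Fin 2) (Fin 2) ℂ)) ∈ W₂ := by
    rw [hW₂]; exact ⟨mu, hev2, rfl⟩
  rcases consistency lam mu h1 h2 with hc | hc
  · have : (fun i => (diagSL (lam i) : Matrix (Fin 2) (Fin 2) ℂ)) ∈ W₂ := by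
      have : (fun i => (diagSL (mu i) : Matrix (Fin 2) (Fin 2) ℂ))
          = fun i => (diagSL (lam i) : Matrix (Fin 2) (Fin 2) ℂ) := by
        funext i; rw [hc i]
      rwa [this] at hmem2
    exact Set.disjoint_left.mp hdisj hmem1 this
  · have hmem2' := hinv₂ mu hmem2
    have : (fun i => (diagSL ((mu i)⁻¹) : Matrix (Fin 2) (Fin 2) ℂ))
        = fun i => (diagSL (lam i) : Matrix (Fin 2) (Fin 2) ℂ) := by
      funext i; rw [hc i, inv_inv]
    rw [this] at hmem2'
    exact Set.disjoint_left.mp hdisj hmem1 hmem2'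
end

section
/- Let g ≥ 1 and for i = 1, …, g let λᵢ, μᵢ ∈ ℂ* and αᵢ, βᵢ ∈ ℂ, and set Aᵢ = [[λᵢ, αᵢ], [0, λᵢ⁻¹]] and Bᵢ = [[μᵢ, βᵢ], [0, μᵢ⁻¹]], which are elements of SL₂(ℂ). Then the product of commutators satisfies ∏_{i=1}^{g} AᵢBᵢAᵢ⁻¹Bᵢ⁻¹ = Id if and only if ∑_{i=1}^{g} λᵢμᵢ ((λᵢ − λᵢ⁻¹)βᵢ − (μᵢ − μᵢ⁻¹)αᵢ) = 0. -/
lemma triSL_mul (l m : ℂˣ) (a b : ℂ) :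
    triSL l a * triSL m b = triSL (l * m) ((l : ℂ) * b + a * ((m⁻¹ : ℂˣ) : ℂ)) := by
  apply Subtype.ext
  rw [Matrix.SpecialLinearGroup.coe_mul]
  simp [triSL, Matrix.SpecialLinearGroup.coe_mul, Matrix.mul_fin_two, mul_comm]

lemma triSL_one : triSL 1 0 = 1 := by
  apply Subtype.ext
  simp [triSL]
  exact (Matrix.etaExpand_eq (1 : Matrix (Fin 2) (Fin 2) ℂ)).symm ▸ rfl

lemma triSL_inv (l : ℂˣ) (a : ℂ) : (triSL l a)⁻¹ = triSL l⁻¹ (-a) := by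
  symm
  apply eq_inv_of_mul_eq_one_right
  rw [triSL_mul]
  simp [← Units.val_mul]
  rw [neg_add_eq_sub, mul_comm, sub_self, triSL_one]

lemma triSL_comm (l m : ℂˣ) (a b : ℂ) :
    triSL l a * triSL m b * (triSL l a)⁻¹ * (triSL m b)⁻¹ =
      triSL 1 ((l : ℂ) * (m : ℂ) *
        (((l : ℂ) - ((l : ℂ))⁻¹) * b - ((m : ℂ) - ((m : ℂ))⁻¹) * a)) := by
  rw [triSL_inv, triSL_inv, triSL_mul, triSL_mul, triSL_mul]
  congr 1
  · simp [mul_right_comm l m l⁻¹]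
  · have hl : (l : ℂ) ≠ 0 := l.ne_zero
    have hm : (m : ℂ) ≠ 0 := m.ne_zero
    push_cast
    field_simp
    ring

lemma triSL_prod {n : ℕ} (c : Fin n → ℂ) :
    (List.ofFn fun i => triSL 1 (c i)).prod = triSL 1 (∑ i, c i) := by
  induction n with
  | zero => simp [triSL_one]
  | succ n ih =>
      rw [List.ofFn_succ, List.prod_cons, ih, triSL_mul, Fin.sum_univ_succ]
      norm_num [add_comm]

lemma triSL_one_iff (s : ℂ) : triSL 1 s = 1 ↔ s = 0 := by
  constructor
  · intro h
    have := congrArg (fun M : Matrix.SpecialLinearGroup (Fin 2) ℂ => (M : Matrix (Fin 2) (Fin 2) ℂ) 0 1) h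
    simpa [triSL] using this
  · rintro rfl; exact triSL_one

/-- The characterization of upper triangular points of the `SL₂(ℂ)`-representation variety
of a genus `g` surface group: with `Aᵢ = [[λᵢ, αᵢ], [0, λᵢ⁻¹]]` and
`Bᵢ = [[μᵢ, βᵢ], [0, μᵢ⁻¹]]`, the product of commutators `∏ᵢ AᵢBᵢAᵢ⁻¹Bᵢ⁻¹` equals the
identity iff `∑ᵢ λᵢμᵢ ((λᵢ − λᵢ⁻¹)βᵢ − (μᵢ − μᵢ⁻¹)αᵢ) = 0`. -/
theorem upperTriangular_surface_relation {g : ℕ} (hg : 1 ≤ g)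
    (lam mu : Fin g → ℂˣ) (α β : Fin g → ℂ) :
    (List.ofFn fun i =>
        triSL (lam i) (α i) * triSL (mu i) (β i) *
          (triSL (lam i) (α i))⁻¹ * (triSL (mu i) (β i))⁻¹).prod = 1 ↔
      ∑ i : Fin g, (lam i : ℂ) * (mu i : ℂ) *
        (((lam i : ℂ) - ((lam i : ℂ))⁻¹) * β i - ((mu i : ℂ) - ((mu i : ℂ))⁻¹) * α i)
        = 0 := by
  simp only [triSL_comm, triSL_prod]
  exact triSL_one_iff _
end

section
/- Let g ≥ 0 and r ≥ 0, let A₁, B₁, …, A_g, B_g ∈ SL₂(ℂ), and let C₁, …, C_r ∈ SL₂(ℂ) be matrices each of which is conjugate in SL₂(ℂ) to J₊ = [[1,1],[0,1]]. Suppose that ∏_{i=1}^{g} AᵢBᵢAᵢ⁻¹Bᵢ⁻¹ · ∏_{j=1}^{r} Cⱼ = −Id. Then there is no nonzero vector v ∈ ℂ² that is simultaneously an eigenvector of every Aᵢ, every Bᵢ and every Cⱼ; that is, the tuple (A₁, B₁, …, A_g, B_g, C₁, …, C_r) is an irreducible representation. -/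
open Matrix

/-- The matrix `J₊ = [[1,1],[0,1]] ∈ SL₂(ℂ)`. -/
def Jplus : Matrix.SpecialLinearGroup (Fin 2) ℂ :=
  ⟨!![1, 1; 0, 1], by simp [Matrix.det_fin_two_of]⟩

lemma eig_ne_zero {M : Matrix (Fin 2) (Fin 2) ℂ} (hdet : M.det = 1)
    {v : Fin 2 → ℂ} (hv : v ≠ 0) {c : ℂ} (h : M.mulVec v = c • v) : c ≠ 0 := by
  rintro rfl
  have : M.det = 0 := Matrix.exists_mulVec_eq_zero_iff.mp ⟨v, hv, by simpa using h⟩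
  simp [hdet] at this

lemma eig_quad {M : Matrix (Fin 2) (Fin 2) ℂ}
    {v : Fin 2 → ℂ} (hv : v ≠ 0) {c : ℂ} (h : M.mulVec v = c • v) :
    (M - c • 1).det = 0 := by
  apply Matrix.exists_mulVec_eq_zero_iff.mp
  exact ⟨v, hv, by simp [Matrix.sub_mulVec, h, Matrix.smul_mulVec]⟩

lemma inv_eig {M : Matrix.SpecialLinearGroup (Fin 2) ℂ} {v : Fin 2 → ℂ} (hv : v ≠ 0)
    {a : ℂ} (h : (M : Matrix (Fin 2) (Fin 2) ℂ).mulVec v = a • v) :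
    ((M⁻¹ : Matrix.SpecialLinearGroup (Fin 2) ℂ) : Matrix (Fin 2) (Fin 2) ℂ).mulVec v
      = a⁻¹ • v := by
  have ha : a ≠ 0 := eig_ne_zero M.2 hv h
  have h1 : ((M⁻¹ : Matrix.SpecialLinearGroup (Fin 2) ℂ) : Matrix (Fin 2) (Fin 2) ℂ)
      * (M : Matrix (Fin 2) (Fin 2) ℂ) = 1 := by
    rw [← Matrix.SpecialLinearGroup.coe_mul, inv_mul_cancel,
      Matrix.SpecialLinearGroup.coe_one]
  have h2 := congrArg (fun N : Matrix (Fin 2) (Fin 2) ℂ => N.mulVec v) h1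
  simp only [← Matrix.mulVec_mulVec, Matrix.one_mulVec, h, Matrix.mulVec_smul] at h2
  have h3 := congrArg (fun w => a⁻¹ • w) h2
  simpa only [smul_smul, inv_mul_cancel₀ ha, one_smul] using h3

lemma comm_eig {A B : Matrix.SpecialLinearGroup (Fin 2) ℂ} {v : Fin 2 → ℂ} (hv : v ≠ 0)
    {a b : ℂ} (ha : (A : Matrix (Fin 2) (Fin 2) ℂ).mulVec v = a • v)
    (hb : (B : Matrix (Fin 2) (Fin 2) ℂ).mulVec v = b • v) :
    ((A * B * A⁻¹ * B⁻¹ : Matrix.SpecialLinearGroup (Fin 2) ℂ) :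
      Matrix (Fin 2) (Fin 2) ℂ).mulVec v = v := by
  have ha0 : a ≠ 0 := eig_ne_zero A.2 hv ha
  have hb0 : b ≠ 0 := eig_ne_zero B.2 hv hb
  have hA' := inv_eig hv ha
  have hB' := inv_eig hv hb
  simp only [Matrix.SpecialLinearGroup.coe_mul, ← Matrix.mulVec_mulVec, hB',
    Matrix.mulVec_smul, hA', ha, hb, smul_smul]
  rw [show b⁻¹ * (a⁻¹ * (b * a)) = 1 by field_simp, one_smul]

lemma prod_eig {v : Fin 2 → ℂ} :
    ∀ L : List (Matrix.SpecialLinearGroup (Fin 2) ℂ),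
      (∀ M ∈ L, (M : Matrix (Fin 2) (Fin 2) ℂ).mulVec v = v) →
      ((L.prod : Matrix.SpecialLinearGroup (Fin 2) ℂ) :
        Matrix (Fin 2) (Fin 2) ℂ).mulVec v = v := by
  intro L
  induction L with
  | nil => intro _; simp
  | cons h t ih =>
    intro hmem
    rw [List.prod_cons, Matrix.SpecialLinearGroup.coe_mul, ← Matrix.mulVec_mulVec,
      ih (fun M hM => hmem M (List.mem_cons_of_mem _ hM)), hmem h List.mem_cons_self]

/-- Twisted representations are irreducible: if `A₁, B₁, …, A_g, B_g ∈ SL₂(ℂ)` and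
`C₁, …, C_r ∈ SL₂(ℂ)` are each conjugate to `J₊`, and
`∏ᵢ AᵢBᵢAᵢ⁻¹Bᵢ⁻¹ · ∏ⱼ Cⱼ = −Id`, then there is no nonzero vector `v ∈ ℂ²` that is a
common eigenvector of all the `Aᵢ`, `Bᵢ` and `Cⱼ`. -/
theorem twisted_representation_irreducible {g r : ℕ}
    (A B : Fin g → Matrix.SpecialLinearGroup (Fin 2) ℂ)
    (C : Fin r → Matrix.SpecialLinearGroup (Fin 2) ℂ)
    (hC : ∀ j, ∃ P : Matrix.SpecialLinearGroup (Fin 2) ℂ, C j = P * Jplus * P⁻¹)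
    (hrel : (((List.ofFn fun i => A i * B i * (A i)⁻¹ * (B i)⁻¹).prod *
        (List.ofFn C).prod : Matrix.SpecialLinearGroup (Fin 2) ℂ) :
        Matrix (Fin 2) (Fin 2) ℂ) = -1) :
    ¬ ∃ v : Fin 2 → ℂ, v ≠ 0 ∧
        (∀ i, ∃ a : ℂ, (A i : Matrix (Fin 2) (Fin 2) ℂ).mulVec v = a • v) ∧
        (∀ i, ∃ b : ℂ, (B i : Matrix (Fin 2) (Fin 2) ℂ).mulVec v = b • v) ∧
        (∀ j, ∃ c : ℂ, (C j : Matrix (Fin 2) (Fin 2) ℂ).mulVec v = c • v) := by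
  rintro ⟨v, hv, hA, hB, hCv⟩
  -- each C j has trace 2, so its eigenvalue on v is 1
  have hCone : ∀ j, ((C j : Matrix (Fin 2) (Fin 2) ℂ)).mulVec v = v := by
    intro j
    obtain ⟨c, hc⟩ := hCv j
    obtain ⟨P, hP⟩ := hC j
    have htr : (C j : Matrix (Fin 2) (Fin 2) ℂ).trace = 2 := by
      have hPP : ((P⁻¹ : Matrix.SpecialLinearGroup (Fin 2) ℂ) :
          Matrix (Fin 2) (Fin 2) ℂ) * (P : Matrix (Fin 2) (Fin 2) ℂ) = 1 := by
        rw [← Matrix.SpecialLinearGroup.coe_mul, inv_mul_cancel,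
          Matrix.SpecialLinearGroup.coe_one]
      rw [hP, Matrix.SpecialLinearGroup.coe_mul, Matrix.SpecialLinearGroup.coe_mul,
        Matrix.trace_mul_comm, ← Matrix.mul_assoc, hPP, Matrix.one_mul]
      simp [Jplus, Matrix.trace_fin_two]
      norm_num
    have hdet : (C j : Matrix (Fin 2) (Fin 2) ℂ).det = 1 := (C j).2
    have hq := eig_quad hv hc
    rw [Matrix.det_fin_two] at hq
    rw [Matrix.det_fin_two] at hdet
    rw [Matrix.trace_fin_two] at htr
    simp only [Matrix.sub_apply, Matrix.smul_apply, Matrix.one_apply_eq,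
      Matrix.one_apply_ne (by decide : (0 : Fin 2) ≠ 1),
      Matrix.one_apply_ne (by decide : (1 : Fin 2) ≠ 0), smul_eq_mul, mul_one,
      mul_zero, sub_zero] at hq
    have hc1 : c = 1 := by
      have hsq : (c - 1) ^ 2 = 0 := by linear_combination hq - hdet + c * htr
      have := pow_eq_zero_iff (n := 2) (by norm_num) |>.mp hsq
      linear_combination this
    rw [hc, hc1, one_smul]
  have hcomm : ∀ M ∈ (List.ofFn fun i => A i * B i * (A i)⁻¹ * (B i)⁻¹),
      (M : Matrix (Fin 2) (Fin 2) ℂ).mulVec v = v := by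
    intro M hM
    rw [List.mem_ofFn] at hM
    obtain ⟨i, rfl⟩ := hM
    obtain ⟨a, ha⟩ := hA i
    obtain ⟨b, hb⟩ := hB i
    exact comm_eig hv ha hb
  have hCL : ∀ M ∈ List.ofFn C, (M : Matrix (Fin 2) (Fin 2) ℂ).mulVec v = v := by
    intro M hM
    rw [List.mem_ofFn] at hM
    obtain ⟨j, rfl⟩ := hM
    exact hCone j
  have h1 := prod_eig _ hcomm
  have h2 := prod_eig _ hCL
  have hfin : ((((List.ofFn fun i => A i * B i * (A i)⁻¹ * (B i)⁻¹).prod *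
      (List.ofFn C).prod : Matrix.SpecialLinearGroup (Fin 2) ℂ)) :
      Matrix (Fin 2) (Fin 2) ℂ).mulVec v = v := by
    rw [Matrix.SpecialLinearGroup.coe_mul, ← Matrix.mulVec_mulVec, h2, h1]
  rw [hrel] at hfin
  rw [Matrix.neg_mulVec, Matrix.one_mulVec] at hfin
  apply hv
  have : (2 : ℂ) • v = 0 := by
    rw [two_smul]
    nth_rewrite 1 [← hfin]
    exact neg_add_cancel v
  rcases smul_eq_zero.mp this with h | h
  · norm_num at h
  · exact h
end
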